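/- For every tree T, the minimal number of searchers for an internal monotone connected edge-clearing search of T equals the minimal number of searchers for an internal monotone connected node-clearing search of T: s_E^{imc}(T) = s_N^{imc}(T). -/

import Mathlib

open SimpleGraph

/-- A move in a graph-search game: place a searcher, remove a searcher,
or slide a searcher along an edge. -/
inductive GMove (V : Type*) where
  | place (v : V)
  | remove (v : V)
  | slide (u v : V)

namespace GMove

/-- The node (if any) entered by the move. -/
def target {V : Type*} : GMove V → Option V
  | place v => some v
  | remove _ => none
  | slide _ v => some v

/-- The edge (if any) traversed by the move. -/
def traversed {V : Type*} : GMove V → Option (Sym2 V)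
  | slide u v => some s(u, v)
  | _ => none

end GMove

variable {V : Type*}

open Classical in
/-- Number of searchers located at each node after `t` moves
(the move between time `t` and `t+1` is `S t`). -/
noncomputable def occ (S : ℕ → GMove V) : ℕ → V → ℕ
  | 0 => fun _ => 0
  | t + 1 => fun x =>
    match S t with
    | .place v => if x = v then occ S t x + 1 else occ S t x
    | .remove v => if x = v then occ S t x - 1 else occ S t x
    | .slide u v =>
        if x = v then occ S t x + 1 else if x = u then occ S t x - 1 else occ S t x

/-- Number of searchers inside the graph after `t` moves. -/
def sn (S : ℕ → GMove V) : ℕ → ℕ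
  | 0 => 0
  | t + 1 =>
    match S t with
    | .place _ => sn S t + 1
    | .remove _ => sn S t - 1
    | .slide _ _ => sn S t

/-- A legal search schedule on `G`: slides go along edges starting from an occupied
node, and removals take place at occupied nodes. -/
def Legal (G : SimpleGraph V) (S : ℕ → GMove V) : Prop :=
  ∀ t, match S t with
    | .place _ => True
    | .remove v => 0 < occ S t v
    | .slide u v => G.Adj u v ∧ 0 < occ S t u

/-- An internal schedule never removes searchers from the graph. -/
def Internal (S : ℕ → GMove V) : Prop := ∀ t v, S t ≠ GMove.remove v

/-- A rooted schedule places searchers only at the root `r`. -/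
def RootedAt (S : ℕ → GMove V) (r : V) : Prop := ∀ t v, S t = GMove.place v → v = r

/-- The set of n-dirty nodes of the node game: initially all nodes are n-dirty;
after a move, a node is n-dirty iff it is joined to a previously n-dirty node by a
path all of whose nodes are unguarded. -/
def ndirty (G : SimpleGraph V) (S : ℕ → GMove V) : ℕ → Set V
  | 0 => Set.univ
  | t + 1 =>
    { u | ∃ w, w ∈ ndirty G S t ∧ ∃ p : G.Walk u w, ∀ x ∈ p.support, occ S (t + 1) x = 0 }

/-- The set of n-dirty edges: edges incident to an n-dirty node. -/
def nEdgeDirty (G : SimpleGraph V) (S : ℕ → GMove V) (t : ℕ) : Set (Sym2 V) :=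
  { e | e ∈ G.edgeSet ∧ ∃ v ∈ e, v ∈ ndirty G S t }

/-- The set of e-dirty edges of the edge game: initially all edges are e-dirty;
a traversed edge is cleared, and an edge is recontaminated when joined to a
(still) e-dirty edge by a path whose interior nodes are unguarded. -/
def edirty (G : SimpleGraph V) (S : ℕ → GMove V) : ℕ → Set (Sym2 V)
  | 0 => G.edgeSet
  | t + 1 =>
    (edirty G S t \ { e | (S t).traversed = some e }) ∪
      { e | ∃ x y q q', e = s(x, y) ∧ G.Adj x y ∧ G.Adj q q' ∧
          (s(q, q') ∈ edirty G S t ∧ (S t).traversed ≠ some s(q, q')) ∧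
          ∃ p : G.Walk y q, ∀ z ∈ p.support, occ S (t + 1) z = 0 }

/-- A node is e-dirty iff it is unguarded and adjacent to an e-dirty edge. -/
def edirtyNode (G : SimpleGraph V) (S : ℕ → GMove V) (t : ℕ) : Set V :=
  { v | occ S t v = 0 ∧ ∃ e ∈ edirty G S t, v ∈ e }

/-- The set of m-dirty edges of the mixed edge game: as in the edge game, but in
addition an edge both of whose endpoints are guarded becomes m-clear. -/
def mdirty (G : SimpleGraph V) (S : ℕ → GMove V) : ℕ → Set (Sym2 V)
  | 0 => G.edgeSet
  | t + 1 =>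
    (mdirty G S t \
        ({ e | (S t).traversed = some e } ∪ { e | ∀ v ∈ e, 0 < occ S (t + 1) v })) ∪
      { e | ∃ x y q q', e = s(x, y) ∧ G.Adj x y ∧ G.Adj q q' ∧
          (s(q, q') ∈ mdirty G S t ∧ (S t).traversed ≠ some s(q, q') ∧
            ¬ (∀ v ∈ (s(q, q') : Sym2 V), 0 < occ S (t + 1) v)) ∧
          ∃ p : G.Walk y q, ∀ z ∈ p.support, occ S (t + 1) z = 0 }

/-- A node is m-dirty iff it is unguarded and adjacent to an m-dirty edge. -/
def mdirtyNode (G : SimpleGraph V) (S : ℕ → GMove V) (t : ℕ) : Set V :=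
  { v | occ S t v = 0 ∧ ∃ e ∈ mdirty G S t, v ∈ e }

/-- The n-clear subgraph: n-clear nodes and all edges of `G` between them. -/
def nclearSubgraph (G : SimpleGraph V) (S : ℕ → GMove V) (t : ℕ) : G.Subgraph where
  verts := (ndirty G S t)ᶜ
  Adj a b := G.Adj a b ∧ a ∉ ndirty G S t ∧ b ∉ ndirty G S t
  adj_sub h := h.1
  edge_vert h := h.2.1
  symm := ⟨fun a b h => ⟨h.1.symm, h.2.2, h.2.1⟩⟩

/-- The e-clear subgraph: e-clear nodes and e-clear edges. -/
def eclearSubgraph (G : SimpleGraph V) (S : ℕ → GMove V) (t : ℕ) : G.Subgraph where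
  verts := { v | v ∉ edirtyNode G S t } ∪ { v | ∃ e ∈ G.edgeSet \ edirty G S t, v ∈ e }
  Adj a b := G.Adj a b ∧ s(a, b) ∈ G.edgeSet \ edirty G S t
  adj_sub h := h.1
  edge_vert {a b} h := Or.inr ⟨s(a, b), h.2, Sym2.mem_mk_left a b⟩
  symm := ⟨fun a b h => ⟨h.1.symm, by rw [Sym2.eq_swap]; exact h.2⟩⟩

/-- The minimum number of searchers over internal monotone connected edge-clearing
schedules of `G`. -/
noncomputable def sEimc {V : Type*} (G : SimpleGraph V) : ℕ :=
  sInf { k | ∃ (S : ℕ → GMove V) (Tf : ℕ), Legal G S ∧ Internal S ∧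
    (∀ t < Tf, edirty G S (t + 1) ⊆ edirty G S t) ∧
    (∀ t : ℕ, 1 ≤ t → t ≤ Tf → (eclearSubgraph G S t).Connected) ∧
    edirty G S Tf = ∅ ∧ ∀ t ≤ Tf, sn S t ≤ k }

/-- The minimum number of searchers over internal monotone connected node-clearing
schedules of `G`. -/
noncomputable def sNimc {V : Type*} (G : SimpleGraph V) : ℕ :=
  sInf { k | ∃ (S : ℕ → GMove V) (Tf : ℕ), Legal G S ∧ Internal S ∧
    (∀ t < Tf, ndirty G S (t + 1) ⊆ ndirty G S t) ∧
    (∀ t : ℕ, 1 ≤ t → t ≤ Tf → (nclearSubgraph G S t).Connected) ∧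
    ndirty G S Tf = ∅ ∧ ∀ t ≤ Tf, sn S t ≤ k }


open Classical

section Basics
variable {V : Type*} {G : SimpleGraph V} {S : ℕ → GMove V}

lemma occ_succ (S : ℕ → GMove V) (t : ℕ) : occ S (t+1) = fun x =>
    match S t with
    | .place v => if x = v then occ S t x + 1 else occ S t x
    | .remove v => if x = v then occ S t x - 1 else occ S t x
    | .slide u v => if x = v then occ S t x + 1 else if x = u then occ S t x - 1 else occ S t x :=
  rfl

lemma occ_zero (S : ℕ → GMove V) : occ S 0 = fun _ => 0 := rfl

lemma sn_succ (S : ℕ → GMove V) (t : ℕ) : sn S (t+1) = match S t with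
    | .place _ => sn S t + 1
    | .remove _ => sn S t - 1
    | .slide _ _ => sn S t := rfl

lemma occ_succ_place {t : ℕ} {v : V} (h : S t = .place v) (x : V) :
    occ S (t + 1) x = if x = v then occ S t x + 1 else occ S t x := by
  rw [occ_succ, h]

lemma occ_succ_slide {t : ℕ} {u v : V} (h : S t = .slide u v) (x : V) :
    occ S (t + 1) x = if x = v then occ S t x + 1
      else if x = u then occ S t x - 1 else occ S t x := by
  rw [occ_succ, h]

lemma ndirty_succ (G : SimpleGraph V) (S : ℕ → GMove V) (t : ℕ) :
    ndirty G S (t+1) =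
      { u | ∃ w, w ∈ ndirty G S t ∧ ∃ p : G.Walk u w, ∀ x ∈ p.support, occ S (t + 1) x = 0 } :=
  rfl

lemma edirty_succ (G : SimpleGraph V) (S : ℕ → GMove V) (t : ℕ) :
    edirty G S (t+1) =
      (edirty G S t \ { e | (S t).traversed = some e }) ∪
      { e | ∃ x y q q', e = s(x, y) ∧ G.Adj x y ∧ G.Adj q q' ∧
          (s(q, q') ∈ edirty G S t ∧ (S t).traversed ≠ some s(q, q')) ∧
          ∃ p : G.Walk y q, ∀ z ∈ p.support, occ S (t + 1) z = 0 } :=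
  rfl

lemma edirty_zero (G : SimpleGraph V) (S : ℕ → GMove V) : edirty G S 0 = G.edgeSet := rfl

lemma ndirty_zero (G : SimpleGraph V) (S : ℕ → GMove V) : ndirty G S 0 = Set.univ := rfl

end Basics

section Basics2
variable {V : Type*} {G : SimpleGraph V} {S : ℕ → GMove V} {t : ℕ}

lemma edirty_subset_edgeSet : ∀ t, edirty G S t ⊆ G.edgeSet
  | 0 => le_refl _
  | t+1 => by
    rw [edirty_succ]
    rintro e (⟨he, _⟩ | ⟨x, y, q, q', rfl, hxy, _⟩)
    · exact edirty_subset_edgeSet t he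
    · exact G.mem_edgeSet.2 hxy

lemma mem_edirty_succ_left {e : Sym2 V} (h : e ∈ edirty G S t)
    (hne : (S t).traversed ≠ some e) : e ∈ edirty G S (t+1) := by
  rw [edirty_succ]; exact Or.inl ⟨h, hne⟩

lemma mem_edirty_succ_recontam {x y q q' : V} (hxy : G.Adj x y) (hqq : G.Adj q q')
    (hd : s(q,q') ∈ edirty G S t) (hnt : (S t).traversed ≠ some s(q,q'))
    (p : G.Walk y q) (hp : ∀ z ∈ p.support, occ S (t+1) z = 0) :
    s(x,y) ∈ edirty G S (t+1) := by
  rw [edirty_succ]; exact Or.inr ⟨x, y, q, q', rfl, hxy, hqq, ⟨hd, hnt⟩, p, hp⟩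

lemma mem_ndirty_succ {u w : V} (hw : w ∈ ndirty G S t) (p : G.Walk u w)
    (hp : ∀ x ∈ p.support, occ S (t+1) x = 0) : u ∈ ndirty G S (t+1) := by
  rw [ndirty_succ]; exact ⟨w, hw, p, hp⟩

lemma ndirty_stay {w : V} (hw : w ∈ ndirty G S t) (h0 : occ S (t+1) w = 0) :
    w ∈ ndirty G S (t+1) :=
  mem_ndirty_succ hw .nil (by simpa using h0)

lemma occ_eq_zero_of_mem_ndirty {u : V} {t : ℕ} (ht : 1 ≤ t) (hu : u ∈ ndirty G S t) :
    occ S t u = 0 := by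
  cases t with
  | zero => omega
  | succ s =>
    rw [ndirty_succ] at hu
    obtain ⟨w, hw, p, hp⟩ := hu
    exact hp u p.start_mem_support

lemma ndirty_extend {u w : V} (hw : w ∈ ndirty G S (t+1)) (p : G.Walk u w)
    (hp : ∀ x ∈ p.support, occ S (t+1) x = 0) : u ∈ ndirty G S (t+1) := by
  rw [ndirty_succ] at hw ⊢
  obtain ⟨w0, hw0, q, hq⟩ := hw
  refine ⟨w0, hw0, p.append q, ?_⟩
  intro x hx
  rw [SimpleGraph.Walk.support_append] at hx
  rcases List.mem_append.1 hx with h | h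
  · exact hp x h
  · exact hq x (List.mem_of_mem_tail h)

lemma ndirty_extend_adj {u w : V} (hw : w ∈ ndirty G S (t+1)) (h : G.Adj u w)
    (hu : occ S (t+1) u = 0) : u ∈ ndirty G S (t+1) := by
  refine ndirty_extend hw (.cons h .nil) ?_
  intro x hx
  have hx' : x = u ∨ x = w := by simpa using hx
  rcases hx' with rfl | rfl
  · exact hu
  · exact occ_eq_zero_of_mem_ndirty (Nat.succ_le_succ (Nat.zero_le _)) hw

lemma legal_slide (hL : Legal G S) {u v : V} (h : S t = .slide u v) :
    G.Adj u v ∧ 0 < occ S t u := by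
  have h' := hL t; rw [h] at h'; exact h'

lemma move_cases (hI : Internal S) (t : ℕ) :
    (∃ v, S t = .place v) ∨ (∃ u v, S t = .slide u v) := by
  cases h : S t with
  | place v => exact Or.inl ⟨v, rfl⟩
  | remove v => exact absurd h (hI t v)
  | slide u v => exact Or.inr ⟨u, v, rfl⟩

lemma traversed_place {v : V} : (GMove.place v : GMove V).traversed = none := rfl
lemma traversed_slide {u v : V} : (GMove.slide u v : GMove V).traversed = some s(u,v) := rfl

lemma edirty_anti {Tf : ℕ} (hmono : ∀ t < Tf, edirty G S (t+1) ⊆ edirty G S t)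
    {a b : ℕ} (hab : a ≤ b) (hb : b ≤ Tf) : edirty G S b ⊆ edirty G S a := by
  induction b with
  | zero => obtain rfl : a = 0 := by omega
            exact le_refl _
  | succ n ih =>
    rcases Nat.eq_or_lt_of_le hab with rfl | hlt
    · exact le_refl _
    · exact (hmono n (by omega)).trans (ih (by omega) (by omega))

lemma ndirty_anti {Tf : ℕ} (hmono : ∀ t < Tf, ndirty G S (t+1) ⊆ ndirty G S t)
    {a b : ℕ} (hab : a ≤ b) (hb : b ≤ Tf) : ndirty G S b ⊆ ndirty G S a := by
  induction b with
  | zero => obtain rfl : a = 0 := by omega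
            exact le_refl _
  | succ n ih =>
    rcases Nat.eq_or_lt_of_le hab with rfl | hlt
    · exact le_refl _
    · exact (hmono n (by omega)).trans (ih (by omega) (by omega))

end Basics2

section Tree
open SimpleGraph
variable {V : Type*} {G : SimpleGraph V}

lemma exists_adj (hc : G.Connected) (hne : G.edgeSet.Nonempty) (v : V) : ∃ w, G.Adj v w := by
  obtain ⟨e, he⟩ := hne
  induction e using Sym2.ind with
  | _ a b =>
    have hab : G.Adj a b := he
    refine (hc.preconnected v a).elim fun p => ?_
    cases p with
    | nil => exact ⟨b, hab⟩
    | cons h q => exact ⟨_, h⟩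

lemma tree_edge_mem_walk (hT : G.IsTree) {a b : V} (hab : G.Adj a b) (p : G.Walk a b) :
    s(a,b) ∈ p.edges := by
  classical
  have heq := hT.2.path_unique ⟨p.bypass, p.bypass_isPath⟩ (SimpleGraph.Path.singleton hab)
  have he : s(a,b) ∈ p.bypass.edges := by
    rw [show p.bypass = (SimpleGraph.Path.singleton hab).val from congrArg Subtype.val heq]
    simp [SimpleGraph.Path.singleton]
  exact p.edges_bypass_subset he

lemma tree_unique_nbr (hT : G.IsTree) {v q₁ q₂ : V} (h1 : G.Adj v q₁) (h2 : G.Adj v q₂)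
    (p : G.Walk q₁ q₂) (hv : v ∉ p.support) : q₁ = q₂ := by
  classical
  have hbp : p.bypass.IsPath := p.bypass_isPath
  have hv' : v ∉ p.bypass.support := fun h => hv (p.support_bypass_subset h)
  have hpath : (SimpleGraph.Walk.cons h1 p.bypass).IsPath := hbp.cons hv'
  have heq := hT.2.path_unique ⟨.cons h1 p.bypass, hpath⟩ (SimpleGraph.Path.singleton h2)
  have hsup := congrArg (fun q : G.Path v q₂ => q.val.support) heq
  simp only [SimpleGraph.Path.singleton, SimpleGraph.Walk.support_cons] at hsup
  have h3 : p.bypass.support = [q₂] := by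
    have h : v :: p.bypass.support = [v, q₂] := hsup
    exact (List.cons_inj_right _).1 h
  have h4 := p.bypass.support_eq_cons
  rw [h3] at h4
  have : q₂ = q₁ := by
    have := congrArg List.head? h4
    simpa using this
  exact this.symm

lemma subgraph_walk_aux {H : G.Subgraph} {x y : H.verts} (w : H.coe.Walk x y) :
    ∃ p : G.Walk x.1 y.1, (∀ z ∈ p.support, z ∈ H.verts) ∧ (∀ e ∈ p.edges, e ∈ H.edgeSet) := by
  induction w with
  | nil =>
    rename_i u
    refine ⟨.nil, ?_, ?_⟩
    · intro z hz
      simp only [SimpleGraph.Walk.support_nil, List.mem_singleton] at hz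
      subst hz; exact u.2
    · intro e he; simp at he
  | cons hadj p ih =>
    rename_i u v w'
    obtain ⟨q, hq1, hq2⟩ := ih
    have hA : H.Adj u.1 v.1 := hadj
    refine ⟨.cons hA.adj_sub q, ?_, ?_⟩
    · intro z hz
      rw [SimpleGraph.Walk.support_cons] at hz
      rcases List.mem_cons.1 hz with rfl | hz
      · exact u.2
      · exact hq1 z hz
    · intro e he
      rw [SimpleGraph.Walk.edges_cons] at he
      rcases List.mem_cons.1 he with rfl | he
      · exact (SimpleGraph.Subgraph.mem_edgeSet).2 hA
      · exact hq2 e he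

lemma subgraph_walk {H : G.Subgraph} (hH : H.Connected) {a b : V}
    (ha : a ∈ H.verts) (hb : b ∈ H.verts) :
    ∃ p : G.Walk a b, (∀ z ∈ p.support, z ∈ H.verts) ∧ (∀ e ∈ p.edges, e ∈ H.edgeSet) := by
  exact (hH ⟨a, ha⟩ ⟨b, hb⟩).elim fun w => subgraph_walk_aux w

lemma subgraph_conn_adj_edge (hT : G.IsTree) {H : G.Subgraph} (hH : H.Connected)
    {a b : V} (ha : a ∈ H.verts) (hb : b ∈ H.verts) (hab : G.Adj a b) :
    s(a,b) ∈ H.edgeSet := by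
  obtain ⟨p, _, hp⟩ := subgraph_walk hH ha hb
  exact hp _ (tree_edge_mem_walk hT hab p)

lemma subgraph_unique_nbr (hT : G.IsTree) {H : G.Subgraph} (hH : H.Connected)
    {v q₁ q₂ : V} (hv : v ∉ H.verts) (hq₁ : q₁ ∈ H.verts) (hq₂ : q₂ ∈ H.verts)
    (h1 : G.Adj v q₁) (h2 : G.Adj v q₂) : q₁ = q₂ := by
  obtain ⟨p, hsup, _⟩ := subgraph_walk hH hq₁ hq₂
  exact tree_unique_nbr hT h1 h2 p (fun h => hv (hsup _ h))

end Tree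

section Shift
variable {V : Type*} {G : SimpleGraph V} {S S' : ℕ → GMove V} {a b : ℕ}

lemma occ_shift (hm : ∀ s, S' (a+s) = S (b+s)) (h0 : occ S' a = occ S b) :
    ∀ s, occ S' (a+s) = occ S (b+s)
  | 0 => h0
  | s+1 => by
    have ih := occ_shift hm h0 s
    rw [show a+(s+1) = (a+s)+1 by omega, show b+(s+1) = (b+s)+1 by omega,
      occ_succ, occ_succ, hm s, ih]

lemma sn_shift (hm : ∀ s, S' (a+s) = S (b+s)) (h0 : sn S' a = sn S b) :
    ∀ s, sn S' (a+s) = sn S (b+s)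
  | 0 => h0
  | s+1 => by
    have ih := sn_shift hm h0 s
    rw [show a+(s+1) = (a+s)+1 by omega, show b+(s+1) = (b+s)+1 by omega,
      sn_succ, sn_succ, hm s, ih]

lemma edirty_shift (hm : ∀ s, S' (a+s) = S (b+s)) (h0 : occ S' a = occ S b)
    (he : edirty G S' a = edirty G S b) :
    ∀ s, edirty G S' (a+s) = edirty G S (b+s)
  | 0 => he
  | s+1 => by
    have ih := edirty_shift hm h0 he s
    have hocc : occ S' (a+s+1) = occ S (b+s+1) := by
      rw [show a+s+1 = a+(s+1) by omega, show b+s+1 = b+(s+1) by omega]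
      exact occ_shift hm h0 (s+1)
    rw [show a+(s+1) = (a+s)+1 by omega, show b+(s+1) = (b+s)+1 by omega,
      edirty_succ, edirty_succ, hm s, ih, hocc]

lemma eclear_congr (h1 : occ S' a = occ S b) (h2 : edirty G S' a = edirty G S b) :
    eclearSubgraph G S' a = eclearSubgraph G S b := by
  have hv : (eclearSubgraph G S' a).verts = (eclearSubgraph G S b).verts := by
    show {v | v ∉ edirtyNode G S' a} ∪ _ = {v | v ∉ edirtyNode G S b} ∪ _
    unfold edirtyNode
    rw [h1, h2]
  have hA : ∀ x y, (eclearSubgraph G S' a).Adj x y ↔ (eclearSubgraph G S b).Adj x y := by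
    intro x y
    show G.Adj x y ∧ s(x,y) ∈ G.edgeSet \ edirty G S' a ↔
      G.Adj x y ∧ s(x,y) ∈ G.edgeSet \ edirty G S b
    rw [h2]
  exact SimpleGraph.Subgraph.ext hv (by funext x y; exact propext (hA x y))

end Shift

section EdgeStruct
open SimpleGraph
variable {V : Type*} {G : SimpleGraph V} {S : ℕ → GMove V} {t Tf : ℕ}

lemma first_move_place (hL : Legal G S) (hI : Internal S) : ∃ v, S 0 = .place v := by
  rcases move_cases hI 0 with h | ⟨u, v, h⟩
  · exact h
  · have h2 := (legal_slide hL h).2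
    rw [occ_zero] at h2
    simp at h2

lemma place_traversed_ne {v : V} (h : S t = .place v) (e : Sym2 V) :
    (S t).traversed ≠ some e := by
  rw [h, traversed_place]; simp

lemma edirty_succ_place_eq {v : V} (h : S t = .place v) :
    edirty G S t ⊆ edirty G S (t+1) :=
  fun e he => mem_edirty_succ_left he (place_traversed_ne h e)

lemma edirty_succ_eq_univ_of_place {v : V} (hall : edirty G S t = G.edgeSet)
    (h : S t = .place v) : edirty G S (t+1) = G.edgeSet := by
  refine le_antisymm (edirty_subset_edgeSet _) ?_
  intro e he
  exact edirty_succ_place_eq h (hall ▸ he)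

lemma edirty_one (hL : Legal G S) (hI : Internal S) : edirty G S 1 = G.edgeSet := by
  obtain ⟨v, h⟩ := first_move_place hL hI
  exact edirty_succ_eq_univ_of_place (edirty_zero G S) h

lemma walk_head_cases {H : G.Subgraph} {a b : V} (p : G.Walk a b)
    (hpe : ∀ e ∈ p.edges, e ∈ H.edgeSet) : a = b ∨ ∃ x, H.Adj a x := by
  cases p with
  | nil => exact Or.inl rfl
  | cons h q =>
    rename_i x
    refine Or.inr ⟨x, (Subgraph.mem_edgeSet).1 (hpe s(a, x) ?_)⟩
    rw [SimpleGraph.Walk.edges_cons]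
    exact List.mem_cons_self

/-- Every guarded vertex is an endpoint of a clear edge, provided some edge is clear. -/
lemma guard_mem_VF (hconn_t : (eclearSubgraph G S t).Connected)
    (hF : (G.edgeSet \ edirty G S t).Nonempty) {v : V} (hv : occ S t v ≠ 0) :
    ∃ e ∈ G.edgeSet \ edirty G S t, v ∈ e := by
  obtain ⟨e, he⟩ := hF
  induction e using Sym2.ind with
  | _ a b =>
    have ha : a ∈ (eclearSubgraph G S t).verts := Or.inr ⟨s(a,b), he, by simp⟩
    have hvv : v ∈ (eclearSubgraph G S t).verts := Or.inl (fun h => hv h.1)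
    obtain ⟨p, _, hpe⟩ := subgraph_walk hconn_t hvv ha
    rcases walk_head_cases p hpe with rfl | ⟨x, hAdj⟩
    · exact ⟨s(v,b), he, by simp⟩
    · exact ⟨s(v,x), hAdj.2, by simp⟩

/-- Before any edge is cleared, all searchers sit on a single vertex. -/
lemma guards_subsingleton (hconn_t : (eclearSubgraph G S t).Connected)
    (hall : edirty G S t = G.edgeSet) {a b : V}
    (ha : occ S t a ≠ 0) (hb : occ S t b ≠ 0) : a = b := by
  have hva : a ∈ (eclearSubgraph G S t).verts := Or.inl (fun h => ha h.1)
  have hvb : b ∈ (eclearSubgraph G S t).verts := Or.inl (fun h => hb h.1)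
  obtain ⟨p, _, hpe⟩ := subgraph_walk hconn_t hva hvb
  rcases walk_head_cases p hpe with rfl | ⟨x, hAdj⟩
  · rfl
  · exact absurd (hall ▸ hAdj.2.1) hAdj.2.2

/-- New clear edges only appear by traversal. -/
lemma clear_grow {e : Sym2 V} (he : e ∈ G.edgeSet \ edirty G S (t+1))
    (hne : (S t).traversed ≠ some e) : e ∈ G.edgeSet \ edirty G S t := by
  refine ⟨he.1, fun hd => he.2 (mem_edirty_succ_left hd hne)⟩

end EdgeStruct

section ThmA
open SimpleGraph
variable {V : Type*} {G : SimpleGraph V} {S : ℕ → GMove V} {Tf : ℕ}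

theorem master_inv (hT : G.IsTree) (hne : G.edgeSet.Nonempty)
    (hL : Legal G S) (hI : Internal S)
    (hmono : ∀ t < Tf, edirty G S (t+1) ⊆ edirty G S t)
    (hconn : ∀ t, 1 ≤ t → t ≤ Tf → (eclearSubgraph G S t).Connected)
    (htame : ∀ t < Tf, edirty G S (t+1) = G.edgeSet → ∃ v, S t = GMove.place v) :
    ∀ t, 1 ≤ t → t ≤ Tf →
      ndirty G S t = {w | occ S t w = 0 ∧ ∀ e ∈ G.edgeSet \ edirty G S t, w ∉ e} := by
  intro t
  induction t with
  | zero => omega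
  | succ n ih =>
    intro _ hle
    -- the inclusion ⊆ , proved uniformly
    have hsub : ndirty G S (n+1) ⊆
        {w | occ S (n+1) w = 0 ∧ ∀ e ∈ G.edgeSet \ edirty G S (n+1), w ∉ e} := by
      intro u hu
      have h0 : occ S (n+1) u = 0 := occ_eq_zero_of_mem_ndirty (by omega) hu
      refine ⟨h0, ?_⟩
      rintro e ⟨heE, hend⟩ hue
      have hu' := hu
      rw [ndirty_succ] at hu'
      obtain ⟨w, hw, p, hp⟩ := hu'
      -- facts about w
      have hwocc : occ S n w = 0 ∧ ∀ e' ∈ G.edgeSet \ edirty G S n, w ∉ e' := by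
        by_cases hn : n = 0
        · subst hn
          refine ⟨rfl, ?_⟩
          rintro e' ⟨h1, h2⟩
          exact absurd h1 h2
        · have := ih (by omega) (by omega)
          rw [this] at hw
          exact hw
      obtain ⟨w', hww'⟩ := exists_adj hT.1 hne w
      have hdirty : s(w,w') ∈ edirty G S n := by
        by_contra hcl
        exact hwocc.2 s(w,w') ⟨G.mem_edgeSet.2 hww', hcl⟩ (Sym2.mem_mk_left _ _)
      have hwp : occ S (n+1) w = 0 := hp w p.end_mem_support
      have hsurv : (S n).traversed ≠ some s(w,w') := by
        rcases move_cases hI n with ⟨v, hv⟩ | ⟨us, vs, hs⟩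
        · exact place_traversed_ne hv _
        · rw [hs, traversed_slide]
          intro hcon
          have hee : s(us,vs) = s(w,w') := by exact Option.some.inj hcon
          have hvs : 0 < occ S (n+1) vs := by
            rw [occ_succ_slide hs]
            simp
          have hus : 0 < occ S n us := (legal_slide hL hs).2
          rcases Sym2.eq_iff.1 hee with ⟨h1, h2⟩ | ⟨h1, h2⟩
          · rw [h1] at hus
            rw [hwocc.1] at hus
            omega
          · rw [h2] at hvs
            rw [hwp] at hvs
            omega
      obtain ⟨x, rfl⟩ : ∃ x, e = s(u, x) := by
        induction e using Sym2.ind with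
        | _ a b =>
          rcases Sym2.mem_iff.1 hue with rfl | rfl
          · exact ⟨b, rfl⟩
          · exact ⟨a, Sym2.eq_swap⟩
      have hAdjux : G.Adj u x := G.mem_edgeSet.1 heE
      have : s(x, u) ∈ edirty G S (n+1) :=
        mem_edirty_succ_recontam hAdjux.symm hww' hdirty hsurv p hp
      rw [Sym2.eq_swap] at this
      exact hend this
    -- base case t = 1
    by_cases hn : n = 0
    · subst hn
      have hE1 : edirty G S 1 = G.edgeSet := edirty_one hL hI
      refine le_antisymm hsub ?_
      intro w hwm
      exact ndirty_stay (by rw [ndirty_zero]; trivial) hwm.1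
    -- inductive case
    have hn1 : 1 ≤ n := by omega
    have hformula := ih hn1 (by omega)
    refine le_antisymm hsub ?_
    rintro w ⟨h0, hVF'⟩
    have hFmono : G.edgeSet \ edirty G S n ⊆ G.edgeSet \ edirty G S (n+1) := by
      rintro e ⟨h1, h2⟩
      exact ⟨h1, fun hc => h2 (hmono n (by omega) hc)⟩
    rcases move_cases hI n with ⟨v, hv⟩ | ⟨us, vs, hs⟩
    · -- place
      have hwv : w ≠ v := by
        intro rfl'
        rw [occ_succ_place hv] at h0
        subst rfl'
        simp at h0
      have hoccn : occ S n w = 0 := by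
        rw [occ_succ_place hv] at h0
        simpa [hwv] using h0
      have : w ∈ ndirty G S n := by
        rw [hformula]
        exact ⟨hoccn, fun e he => hVF' e (hFmono he)⟩
      exact ndirty_stay this h0
    · -- slide
      have hvs : w ≠ vs := by
        intro rfl'
        rw [occ_succ_slide hs] at h0
        subst rfl'
        simp at h0
      have hus : w ≠ us := by
        intro rfl'
        subst rfl'
        have hAdj : G.Adj w vs := (legal_slide hL hs).1
        by_cases hcl : s(w, vs) ∈ edirty G S (n+1)
        · by_cases hall : edirty G S (n+1) = G.edgeSet
          · obtain ⟨v, hv⟩ := htame n (by omega) hall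
            rw [hv] at hs
            exact (by cases hs)
          · have hFne : (G.edgeSet \ edirty G S (n+1)).Nonempty := by
              rcases Set.not_subset.1 (fun hss => hall (le_antisymm (edirty_subset_edgeSet _)  hss)) with ⟨e, he1, he2⟩
              exact ⟨e, he1, he2⟩
            obtain ⟨e, he⟩ := hFne
            have heF : e ∈ G.edgeSet \ edirty G S n := by
              apply clear_grow he
              rw [hs, traversed_slide]
              intro hcon
              have := Option.some.inj hcon
              rw [this] at hcl
              exact he.2 hcl
            obtain ⟨e', he', hwe'⟩ := guard_mem_VF (hconn n hn1 (by omega)) ⟨e, heF⟩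
              (legal_slide hL hs).2.ne'
            exact hVF' e' (hFmono he') hwe'
        · exact hVF' s(w,vs) ⟨G.mem_edgeSet.2 hAdj, hcl⟩ (Sym2.mem_mk_left _ _)
      have hoccn : occ S n w = 0 := by
        rw [occ_succ_slide hs] at h0
        simpa [hvs, hus] using h0
      have : w ∈ ndirty G S n := by
        rw [hformula]
        exact ⟨hoccn, fun e he => hVF' e (hFmono he)⟩
      exact ndirty_stay this h0

end ThmA

section ThmA2
open SimpleGraph
variable {V : Type*} {G : SimpleGraph V} {S : ℕ → GMove V} {Tf : ℕ}

lemma vacated_mem_VF (hL : Legal G S) (hI : Internal S)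
    (hmono : ∀ t < Tf, edirty G S (t+1) ⊆ edirty G S t)
    (hconn : ∀ t, 1 ≤ t → t ≤ Tf → (eclearSubgraph G S t).Connected)
    (htame : ∀ t < Tf, edirty G S (t+1) = G.edgeSet → ∃ v, S t = GMove.place v)
    {n : ℕ} (hn1 : 1 ≤ n) (hle : n + 1 ≤ Tf) {us vs : V} (hs : S n = .slide us vs) :
    ∃ e ∈ G.edgeSet \ edirty G S (n+1), us ∈ e := by
  have hAdj : G.Adj us vs := (legal_slide hL hs).1
  by_cases hcl : s(us, vs) ∈ edirty G S (n+1)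
  · by_cases hall : edirty G S (n+1) = G.edgeSet
    · obtain ⟨v, hv⟩ := htame n (by omega) hall
      rw [hv] at hs
      exact (by cases hs)
    · have hFne : (G.edgeSet \ edirty G S (n+1)).Nonempty := by
        rcases Set.not_subset.1 (fun hss => hall (le_antisymm (edirty_subset_edgeSet _) hss))
          with ⟨e, he1, he2⟩
        exact ⟨e, he1, he2⟩
      obtain ⟨e, he⟩ := hFne
      have heF : e ∈ G.edgeSet \ edirty G S n := by
        apply clear_grow he
        rw [hs, traversed_slide]
        intro hcon
        have := Option.some.inj hcon
        rw [this] at hcl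
        exact he.2 hcl
      obtain ⟨e', he', hwe'⟩ := guard_mem_VF (hconn n hn1 (by omega)) ⟨e, heF⟩
        (legal_slide hL hs).2.ne'
      exact ⟨e', ⟨he'.1, fun hc => he'.2 (hmono n (by omega) hc)⟩, hwe'⟩
  · exact ⟨s(us,vs), ⟨G.mem_edgeSet.2 hAdj, hcl⟩, Sym2.mem_mk_left _ _⟩

theorem nodeOfTameEdge (hT : G.IsTree) (hne : G.edgeSet.Nonempty)
    (hL : Legal G S) (hI : Internal S)
    (hmono : ∀ t < Tf, edirty G S (t+1) ⊆ edirty G S t)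
    (hconn : ∀ t, 1 ≤ t → t ≤ Tf → (eclearSubgraph G S t).Connected)
    (hTf : edirty G S Tf = ∅)
    (htame : ∀ t < Tf, edirty G S (t+1) = G.edgeSet → ∃ v, S t = GMove.place v) :
    (∀ t < Tf, ndirty G S (t+1) ⊆ ndirty G S t) ∧
    (∀ t, 1 ≤ t → t ≤ Tf → (nclearSubgraph G S t).Connected) ∧
    ndirty G S Tf = ∅ := by
  have master := master_inv hT hne hL hI hmono hconn htame
  have hTfpos : 1 ≤ Tf := by
    rcases Nat.eq_zero_or_pos Tf with h | h
    · exfalso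
      rw [h, edirty_zero] at hTf
      exact hne.ne_empty hTf
    · exact h
  refine ⟨?_, ?_, ?_⟩
  · -- monotonicity
    intro t ht
    by_cases ht0 : t = 0
    · subst ht0
      intro x _
      rw [ndirty_zero]
      trivial
    have ht1 : 1 ≤ t := by omega
    rw [master t ht1 (by omega), master (t+1) (by omega) (by omega)]
    rintro w ⟨h0, hVF⟩
    have hFmono : G.edgeSet \ edirty G S t ⊆ G.edgeSet \ edirty G S (t+1) := by
      rintro e ⟨h1, h2⟩
      exact ⟨h1, fun hc => h2 (hmono t (by omega) hc)⟩
    refine ⟨?_, fun e he => hVF e (hFmono he)⟩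
    rcases move_cases hI t with ⟨v, hv⟩ | ⟨us, vs, hs⟩
    · have hwv : w ≠ v := by
        intro rfl'
        rw [occ_succ_place hv] at h0
        subst rfl'
        simp at h0
      rw [occ_succ_place hv] at h0
      simpa [hwv] using h0
    · have hvs : w ≠ vs := by
        intro rfl'
        rw [occ_succ_slide hs] at h0
        subst rfl'
        simp at h0
      have hus : w ≠ us := by
        intro rfl'
        subst rfl'
        obtain ⟨e, he, hwe⟩ := vacated_mem_VF hL hI hmono hconn htame ht1 (by omega) hs
        exact hVF e he hwe
      rw [occ_succ_slide hs] at h0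
      simpa [hvs, hus] using h0
  · -- connectivity
    intro t ht1 ht2
    have hEq : nclearSubgraph G S t = eclearSubgraph G S t := by
      have hverts : (nclearSubgraph G S t).verts = (eclearSubgraph G S t).verts := by
        ext x
        constructor
        · intro hx
          have hx' : x ∉ ndirty G S t := hx
          rw [master t ht1 ht2] at hx'
          simp only [Set.mem_setOf_eq, not_and, not_forall] at hx'
          by_cases hocc : occ S t x = 0
          · obtain ⟨e, he, hxe⟩ := hx' hocc
            simp only [not_not] at hxe
            exact Or.inr ⟨e, he, hxe⟩
          · exact Or.inl (fun h => hocc h.1)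
        · intro hx
          show x ∉ ndirty G S t
          rw [master t ht1 ht2]
          rintro ⟨h0, hVF⟩
          rcases hx with hx | ⟨e, he, hxe⟩
          · apply hx
            refine ⟨h0, ?_⟩
            obtain ⟨x', hxx'⟩ := exists_adj hT.1 hne x
            by_cases hd : s(x,x') ∈ edirty G S t
            · exact ⟨s(x,x'), hd, Sym2.mem_mk_left _ _⟩
            · exact absurd (Sym2.mem_mk_left x x')
                (hVF s(x,x') ⟨G.mem_edgeSet.2 hxx', hd⟩)
          · exact hVF e he hxe
      have hAdj : ∀ a b, (nclearSubgraph G S t).Adj a b ↔ (eclearSubgraph G S t).Adj a b := by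
        intro a b
        constructor
        · rintro ⟨hab, ha, hb⟩
          have ha' : a ∈ (eclearSubgraph G S t).verts := by rw [← hverts]; exact ha
          have hb' : b ∈ (eclearSubgraph G S t).verts := by rw [← hverts]; exact hb
          have := subgraph_conn_adj_edge hT (hconn t ht1 ht2) ha' hb' hab
          exact (Subgraph.mem_edgeSet).1 this
        · rintro ⟨hab, he⟩
          refine ⟨hab, ?_, ?_⟩
          · rw [master t ht1 ht2]
            rintro ⟨h0, hVF⟩
            exact hVF s(a,b) he (Sym2.mem_mk_left _ _)
          · rw [master t ht1 ht2]
            rintro ⟨h0, hVF⟩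
            exact hVF s(a,b) he (Sym2.mem_mk_right _ _)
      exact Subgraph.ext hverts (by funext a b; exact propext (hAdj a b))
    rw [hEq]
    exact hconn t ht1 ht2
  · -- final emptiness
    rw [master Tf hTfpos (le_refl _)]
    ext w
    simp only [Set.mem_setOf_eq, Set.mem_empty_iff_false, iff_false, not_and, not_forall]
    intro h0
    obtain ⟨w', hww'⟩ := exists_adj hT.1 hne w
    refine ⟨s(w,w'), ⟨G.mem_edgeSet.2 hww', ?_⟩, by simp⟩
    rw [hTf]
    exact Set.notMem_empty _

end ThmA2

section Surgery
open SimpleGraph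
variable {V : Type*} {G : SimpleGraph V} {S : ℕ → GMove V} {Tf : ℕ}

lemma subgraph_connected_of_verts_singleton {H : G.Subgraph} {r : V}
    (h : H.verts = {r}) : H.Connected := by
  rw [SimpleGraph.Subgraph.connected_iff]
  constructor
  · constructor
    intro a b
    have ha : (a : V) = r := Set.mem_singleton_iff.1 (by rw [← h]; exact a.2)
    have hb : (b : V) = r := Set.mem_singleton_iff.1 (by rw [← h]; exact b.2)
    have hab : a = b := Subtype.ext (ha.trans hb.symm)
    rw [hab]
  · rw [h]; exact ⟨r, rfl⟩

lemma concentration (hL : Legal G S) (hI : Internal S)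
    (hconn : ∀ t, 1 ≤ t → t ≤ Tf → (eclearSubgraph G S t).Connected)
    {tmax : ℕ} (hpre : ∀ t' ≤ tmax, edirty G S t' = G.edgeSet) (htmax : tmax ≤ Tf)
    (v₀ : V) :
    ∀ t ≤ tmax, ∃ r, ∀ x, occ S t x = if x = r then sn S t else 0 := by
  intro t
  induction t with
  | zero =>
    intro _
    exact ⟨v₀, fun x => by rw [occ_zero]; simp [sn]⟩
  | succ n ih =>
    intro hle
    obtain ⟨r, hr⟩ := ih (by omega)
    rcases move_cases hI n with ⟨v, hv⟩ | ⟨us, vs, hs⟩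
    · by_cases hsn : sn S n = 0
      · refine ⟨v, fun x => ?_⟩
        rw [occ_succ_place hv, hr x, sn_succ, hv, hsn]
        by_cases hx : x = v <;> simp [hx]
      · have hvr : v = r := by
          apply guards_subsingleton (hconn (n+1) (by omega) (by omega))
            (hpre (n+1) hle)
          · rw [occ_succ_place hv]
            simp
          · rw [occ_succ_place hv, hr r]
            simp only [if_pos rfl]
            by_cases hrv : r = v <;> simp [hrv] <;> omega
        subst hvr
        refine ⟨v, fun x => ?_⟩
        rw [occ_succ_place hv, hr x, sn_succ, hv]
        by_cases hx : x = v <;> simp [hx]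
    · have hadj : G.Adj us vs := (legal_slide hL hs).1
      have hocc : 0 < occ S n us := (legal_slide hL hs).2
      have husr : us = r := by
        by_contra hne'
        rw [hr us, if_neg hne'] at hocc
        omega
      have hadjr : G.Adj r vs := husr ▸ hadj
      have hvsr : vs ≠ r := fun h => G.irrefl (h ▸ hadjr)
      have hsn1 : sn S n = 1 := by
        by_contra hsn1
        have hsnpos : 0 < sn S n := by
          rw [hr us, if_pos husr] at hocc; omega
        have heq : r = vs := by
          apply guards_subsingleton (hconn (n+1) (by omega) (by omega)) (hpre (n+1) hle)
          · rw [occ_succ_slide hs]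
            rw [if_neg hvsr.symm, show (r = us) = (r = r) by rw [husr], if_pos rfl, hr r,
              if_pos rfl]
            omega
          · rw [occ_succ_slide hs, if_pos rfl]
            simp
        exact hvsr heq.symm
      refine ⟨vs, fun x => ?_⟩
      rw [occ_succ_slide hs x, sn_succ, hs, hr x]
      rcases eq_or_ne x vs with rfl | hxvs
      · rw [if_pos rfl, if_pos rfl, if_neg hvsr, hsn1]
      · rw [if_neg hxvs, if_neg hxvs]
        rcases eq_or_ne x us with rfl | hxus
        · rw [if_pos rfl, if_pos husr, hsn1]
        · rw [if_neg hxus, if_neg (fun h => hxus (h.trans husr.symm))]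

end Surgery

section Surgery2
open SimpleGraph
variable {V : Type*} {G : SimpleGraph V} {S : ℕ → GMove V} {Tf : ℕ}

theorem tame_surgery (hT : G.IsTree) (hne : G.edgeSet.Nonempty) {k : ℕ}
    (hL : Legal G S) (hI : Internal S)
    (hmono : ∀ t < Tf, edirty G S (t+1) ⊆ edirty G S t)
    (hconn : ∀ t, 1 ≤ t → t ≤ Tf → (eclearSubgraph G S t).Connected)
    (hTf : edirty G S Tf = ∅) (hsn : ∀ t ≤ Tf, sn S t ≤ k) :
    ∃ (S' : ℕ → GMove V) (Tf' : ℕ), Legal G S' ∧ Internal S' ∧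
      (∀ t < Tf', edirty G S' (t+1) ⊆ edirty G S' t) ∧
      (∀ t, 1 ≤ t → t ≤ Tf' → (eclearSubgraph G S' t).Connected) ∧
      edirty G S' Tf' = ∅ ∧ (∀ t ≤ Tf', sn S' t ≤ k) ∧
      (∀ t < Tf', edirty G S' (t+1) = G.edgeSet → ∃ v, S' t = GMove.place v) := by
  classical
  have hEne : (G.edgeSet : Set (Sym2 V)) ≠ ∅ := hne.ne_empty
  have hex : ∃ t, edirty G S t ≠ G.edgeSet := ⟨Tf, by rw [hTf]; exact fun h => hEne h.symm⟩
  have ht₀ : edirty G S (Nat.find hex) ≠ G.edgeSet := Nat.find_spec hex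
  set t₀ := Nat.find hex with ht₀def
  have hpre : ∀ t < t₀, edirty G S t = G.edgeSet := fun t ht => not_not.1 (Nat.find_min hex ht)
  have ht₀pos : 1 ≤ t₀ := by
    rcases Nat.eq_zero_or_pos t₀ with h | h
    · exact absurd (by rw [h]; exact edirty_zero G S) ht₀
    · exact h
  have ht₀Tf : t₀ ≤ Tf := by
    by_contra hgt
    have := hpre Tf (by omega)
    rw [hTf] at this
    exact hEne this.symm
  obtain ⟨m, hm⟩ : ∃ m, t₀ = m + 1 := ⟨t₀ - 1, by omega⟩
  have hEm : edirty G S m = G.edgeSet := hpre m (by omega)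
  obtain ⟨us, vs, hslide⟩ : ∃ u v, S m = .slide u v := by
    rcases move_cases hI m with ⟨v, hv⟩ | h
    · exfalso
      apply ht₀
      rw [hm]
      exact edirty_succ_eq_univ_of_place hEm hv
    · exact h
  have hoccm : 0 < occ S m us := (legal_slide hL hslide).2
  obtain ⟨r, hr⟩ := concentration hL hI hconn
    (tmax := m) (fun t' h => hpre t' (by omega)) (by omega) us m (le_refl m)
  set j := sn S m with hj
  have hjpos : 1 ≤ j := by
    rcases Nat.eq_zero_or_pos j with h | h
    · rw [hr us, h] at hoccm
      by_cases hus : us = r <;> simp [hus] at hoccm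
    · exact h
  set S' : ℕ → GMove V := fun n => if n < j then .place r else S (m + (n - j)) with hS'def
  have hshift : ∀ s, S' (j + s) = S (m + s) := by
    intro s
    simp only [hS'def]
    rw [if_neg (by omega), Nat.add_sub_cancel_left]
  have hprefix : ∀ n < j, S' n = .place r := by
    intro n hn
    simp only [hS'def]
    rw [if_pos hn]
  -- prefix states
  have hpocc : ∀ t ≤ j, occ S' t = fun x => if x = r then t else 0 := by
    intro t
    induction t with
    | zero => intro _; funext x; rw [occ_zero]; simp
    | succ n ih =>
      intro hle
      have hn := ih (by omega)
      have hplace : S' n = .place r := hprefix n (by omega)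
      funext x
      rw [occ_succ_place hplace, hn]
      by_cases hx : x = r <;> simp [hx]
  have hpsn : ∀ t ≤ j, sn S' t = t := by
    intro t
    induction t with
    | zero => intro _; rfl
    | succ n ih =>
      intro hle
      rw [sn_succ, hprefix n (by omega), ih (by omega)]
  have hpedirty : ∀ t ≤ j, edirty G S' t = G.edgeSet := by
    intro t
    induction t with
    | zero => intro _; exact edirty_zero G S'
    | succ n ih =>
      intro hle
      exact edirty_succ_eq_univ_of_place (ih (by omega)) (hprefix n (by omega))
  -- boundary match
  have hocc0 : occ S' j = occ S m := by
    funext x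
    rw [hpocc j le_rfl, hr x]
  have hsn0 : sn S' j = sn S m := by rw [hpsn j le_rfl]
  have hed0 : edirty G S' j = edirty G S m := by rw [hpedirty j le_rfl, hEm]
  have hoccs := occ_shift hshift hocc0
  have hsns := sn_shift hshift hsn0
  have heds := edirty_shift hshift hocc0 hed0
  have hmTf : m ≤ Tf := by omega
  refine ⟨S', j + (Tf - m), ?_, ?_, ?_, ?_, ?_, ?_, ?_⟩
  · -- Legal
    intro n
    by_cases hn : n < j
    · rw [hprefix n hn]
      trivial
    · have hSn : S' n = S (m + (n - j)) := by
        have := hshift (n - j)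
        rw [show j + (n - j) = n by omega] at this
        exact this
      rw [hSn]
      rcases move_cases hI (m + (n - j)) with ⟨v, hv⟩ | ⟨u, v, hv⟩
      · rw [hv]; trivial
      · rw [hv]
        refine ⟨(legal_slide hL hv).1, ?_⟩
        have := hoccs (n - j)
        rw [show j + (n - j) = n by omega] at this
        rw [this]
        exact (legal_slide hL hv).2
  · -- Internal
    intro n v
    by_cases hn : n < j
    · rw [hprefix n hn]
      exact fun h => (by cases h)
    · have hSn : S' n = S (m + (n - j)) := by
        have := hshift (n - j)
        rw [show j + (n - j) = n by omega] at this
        exact this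
      rw [hSn]
      exact hI _ v
  · -- monotone
    intro t ht
    by_cases htj : t + 1 ≤ j
    · rw [hpedirty (t+1) htj, hpedirty t (by omega)]
    · have hts : t = j + (t - j) := by omega
      have h1 : edirty G S' (t+1) = edirty G S (m + (t - j) + 1) := by
        have := heds (t - j + 1)
        rw [show j + (t - j + 1) = t + 1 by omega] at this
        rw [this, show m + (t - j + 1) = m + (t - j) + 1 by omega]
      have h2 : edirty G S' t = edirty G S (m + (t - j)) := by
        have := heds (t - j)
        rw [← hts] at this
        exact this
      rw [h1, h2]
      exact hmono (m + (t - j)) (by omega)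
  · -- connectivity
    intro t ht1 ht2
    by_cases htj : t ≤ j
    · apply subgraph_connected_of_verts_singleton (r := r)
      ext x
      constructor
      · rintro (hx | ⟨e, he, hxe⟩)
        · by_contra hxr
          have hxr' : x ≠ r := fun h => hxr (by rw [h]; rfl)
          apply hx
          refine ⟨by rw [hpocc t htj]; simp [hxr'], ?_⟩
          obtain ⟨x', hxx'⟩ := exists_adj hT.1 hne x
          exact ⟨s(x,x'), by rw [hpedirty t htj]; exact G.mem_edgeSet.2 hxx', Sym2.mem_mk_left _ _⟩
        · exfalso
          rw [hpedirty t htj] at he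
          exact he.2 he.1
      · intro hx
        left
        rintro ⟨h0, _⟩
        rw [hpocc t htj] at h0
        rw [Set.mem_singleton_iff.1 hx] at h0
        simp at h0
        omega
    · have hts : t = j + (t - j) := by omega
      have h1 : occ S' t = occ S (m + (t - j)) := by
        have := hoccs (t - j); rw [← hts] at this; exact this
      have h2 : edirty G S' t = edirty G S (m + (t - j)) := by
        have := heds (t - j); rw [← hts] at this; exact this
      rw [eclear_congr h1 h2]
      exact hconn (m + (t - j)) (by omega) (by omega)
  · -- final
    have := heds (Tf - m)
    rw [this, show m + (Tf - m) = Tf by omega, hTf]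
  · -- sn bound
    intro t ht
    by_cases htj : t ≤ j
    · rw [hpsn t htj]
      calc t ≤ j := htj
        _ = sn S m := rfl
        _ ≤ k := hsn m hmTf
    · have hts : t = j + (t - j) := by omega
      have h1 : sn S' t = sn S (m + (t - j)) := by
        have := hsns (t - j); rw [← hts] at this; exact this
      rw [h1]
      exact hsn (m + (t - j)) (by omega)
  · -- tame
    intro t ht htE
    by_cases hn : t < j
    · exact ⟨r, hprefix t hn⟩
    · exfalso
      have h1 : edirty G S' (t+1) = edirty G S (m + (t - j) + 1) := by
        have := heds (t - j + 1)
        rw [show j + (t - j + 1) = t + 1 by omega] at this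
        rw [this, show m + (t - j + 1) = m + (t - j) + 1 by omega]
      apply ht₀
      refine le_antisymm (edirty_subset_edgeSet _) ?_
      have hle2 : t₀ ≤ m + (t - j) + 1 := by omega
      have hle3 : m + (t - j) + 1 ≤ Tf := by omega
      calc (G.edgeSet : Set (Sym2 V)) = edirty G S' (t+1) := htE.symm
        _ = edirty G S (m + (t - j) + 1) := h1
        _ ⊆ edirty G S t₀ := edirty_anti hmono hle2 hle3

end Surgery2

section Dilation
variable {V : Type*} {G : SimpleGraph V} {S S2 : ℕ → GMove V}

lemma occ_congr_lt : ∀ {t}, (∀ s < t, S s = S2 s) → occ S t = occ S2 t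
  | 0, _ => rfl
  | t+1, h => by
    rw [occ_succ, occ_succ, h t (by omega), occ_congr_lt (fun s hs => h s (by omega))]

lemma sn_congr_lt : ∀ {t}, (∀ s < t, S s = S2 s) → sn S t = sn S2 t
  | 0, _ => rfl
  | t+1, h => by
    rw [sn_succ, sn_succ, h t (by omega), sn_congr_lt (fun s hs => h s (by omega))]

lemma edirty_congr_lt : ∀ {t}, (∀ s < t, S s = S2 s) → edirty G S t = edirty G S2 t
  | 0, _ => rfl
  | t+1, h => by
    rw [edirty_succ, edirty_succ, h t (by omega),
      edirty_congr_lt (fun s hs => h s (by omega)),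
      occ_congr_lt (fun s hs => h s (by omega))]

lemma ndirty_congr_lt : ∀ {t}, (∀ s < t, S s = S2 s) → ndirty G S t = ndirty G S2 t
  | 0, _ => rfl
  | t+1, h => by
    rw [ndirty_succ, ndirty_succ,
      ndirty_congr_lt (fun s hs => h s (by omega)),
      occ_congr_lt (fun s hs => h s (by omega))]

/-- Dilated time: step `t` of the original schedule starts at time `dtime two t`. -/
def dtime (two : ℕ → Bool) : ℕ → ℕ
  | 0 => 0
  | t+1 => dtime two t + (if two t then 2 else 1)

/-- Which original step is executing at a dilated time, and whether we are in
the second half of a doubled step. -/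
def dil (two : ℕ → Bool) : ℕ → ℕ × Bool
  | 0 => (0, false)
  | n+1 =>
    match dil two n with
    | (t, false) => if two t then (t, true) else (t+1, false)
    | (t, true) => (t+1, false)

lemma dtime_succ (two : ℕ → Bool) (t : ℕ) :
    dtime two (t+1) = dtime two t + (if two t then 2 else 1) := rfl

lemma dil_spec (two : ℕ → Bool) : ∀ t, dil two (dtime two t) = (t, false) := by
  intro t
  induction t with
  | zero => rfl
  | succ n ih =>
    rw [dtime_succ]
    by_cases h : two n
    · rw [if_pos h]
      have h1 : dil two (dtime two n + 1) = (n, true) := by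
        show (match dil two (dtime two n) with
          | (t, false) => if two t then (t, true) else (t+1, false)
          | (t, true) => (t+1, false)) = (n, true)
        rw [ih]
        dsimp only
        rw [h]
        rfl
      show (match dil two (dtime two n + 1) with
        | (t, false) => if two t then (t, true) else (t+1, false)
        | (t, true) => (t+1, false)) = (n+1, false)
      rw [h1]
    · rw [if_neg h]
      show (match dil two (dtime two n) with
        | (t, false) => if two t then (t, true) else (t+1, false)
        | (t, true) => (t+1, false)) = (n+1, false)
      rw [ih]
      simp [h]

lemma dil_spec2 (two : ℕ → Bool) (t : ℕ) (h : two t = true) :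
    dil two (dtime two t + 1) = (t, true) := by
  show (match dil two (dtime two t) with
    | (t, false) => if two t then (t, true) else (t+1, false)
    | (t, true) => (t+1, false)) = (t, true)
  rw [dil_spec]
  dsimp only
  rw [h]
  rfl

lemma dtime_ge (two : ℕ → Bool) : ∀ t, t ≤ dtime two t
  | 0 => le_refl _
  | t+1 => by
    rw [dtime_succ]
    have := dtime_ge two t
    by_cases h : two t <;> simp [h] <;> omega

lemma dtime_mono (two : ℕ → Bool) {a b : ℕ} (h : a ≤ b) : dtime two a ≤ dtime two b := by
  induction b with
  | zero =>
    obtain rfl : a = 0 := by omega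
    exact le_refl _
  | succ n ih =>
    rcases Nat.eq_or_lt_of_le h with rfl | hlt
    · exact le_refl _
    · refine (ih (by omega)).trans ?_
      rw [dtime_succ]
      by_cases h2 : two n <;> simp [h2]

/-- Every dilated time is the start or the middle of the chunk of some step. -/
lemma dil_inv (two : ℕ → Bool) : ∀ n, (∀ t, dil two n = (t, false) → n = dtime two t) ∧
    (∀ t, dil two n = (t, true) → two t = true ∧ n = dtime two t + 1) := by
  intro n
  induction n with
  | zero =>
    constructor
    · intro t h
      have : t = 0 := by
        have := congrArg Prod.fst h
        simpa [show dil two 0 = (0, false) from rfl] using this.symm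
      subst this
      rfl
    · intro t h
      have h0 : dil two 0 = (0, false) := rfl
      rw [h0] at h
      have := congrArg Prod.snd h
      simp at this
  | succ n ih =>
    obtain ⟨ih1, ih2⟩ := ih
    rcases hd : dil two n with ⟨t', b⟩
    cases b with
    | false =>
      have hn : n = dtime two t' := ih1 t' hd
      constructor
      · intro t h
        have hstep : dil two (n+1) = if two t' then (t', true) else (t'+1, false) := by
          show (match dil two n with
            | (t, false) => if two t then (t, true) else (t+1, false)
            | (t, true) => (t+1, false)) = _
          rw [hd]
        by_cases h2 : two t'
        · rw [hstep, if_pos h2] at h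
          have := congrArg Prod.snd h
          simp at this
        · rw [hstep, if_neg h2] at h
          have : t'+1 = t := congrArg Prod.fst h
          subst this
          rw [dtime_succ, if_neg h2, ← hn]
      · intro t h
        have hstep : dil two (n+1) = if two t' then (t', true) else (t'+1, false) := by
          show (match dil two n with
            | (t, false) => if two t then (t, true) else (t+1, false)
            | (t, true) => (t+1, false)) = _
          rw [hd]
        by_cases h2 : two t'
        · rw [hstep, if_pos h2] at h
          have : t' = t := congrArg Prod.fst h
          subst this
          exact ⟨h2, by rw [← hn]⟩
        · rw [hstep, if_neg h2] at h
          have := congrArg Prod.snd h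
          simp at this
    | true =>
      obtain ⟨h2, hn⟩ := ih2 t' hd
      have hstep : dil two (n+1) = (t'+1, false) := by
        show (match dil two n with
          | (t, false) => if two t then (t, true) else (t+1, false)
          | (t, true) => (t+1, false)) = _
        rw [hd]
      constructor
      · intro t h
        rw [hstep] at h
        have : t'+1 = t := congrArg Prod.fst h
        subst this
        rw [dtime_succ, if_pos h2, hn]
      · intro t h
        rw [hstep] at h
        have := congrArg Prod.snd h
        simp at this

end Dilation

section NodeStruct
open SimpleGraph
variable {V : Type*} {G : SimpleGraph V} {S : ℕ → GMove V} {t : ℕ}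

lemma ndirty_extend' (ht : 1 ≤ t) {u w : V} (hw : w ∈ ndirty G S t) (p : G.Walk u w)
    (hp : ∀ x ∈ p.support, occ S t x = 0) : u ∈ ndirty G S t := by
  cases t with
  | zero => omega
  | succ s => exact ndirty_extend hw p hp

lemma occ_unchanged_place {v : V} (h : S t = .place v) {x : V} (hx : x ≠ v) :
    occ S (t+1) x = occ S t x := by rw [occ_succ_place h, if_neg hx]

lemma occ_unchanged_slide {u v : V} (h : S t = .slide u v) {x : V}
    (h1 : x ≠ v) (h2 : x ≠ u) : occ S (t+1) x = occ S t x := by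
  rw [occ_succ_slide h, if_neg h1, if_neg h2]

lemma occ_target_place {v : V} (h : S t = .place v) : 0 < occ S (t+1) v := by
  rw [occ_succ_place h, if_pos rfl]; omega

lemma occ_target_slide {u v : V} (h : S t = .slide u v) : 0 < occ S (t+1) v := by
  rw [occ_succ_slide h, if_pos rfl]; omega

lemma mem_nEdgeDirty {e : Sym2 V} (he : e ∈ G.edgeSet) {v : V} (hv : v ∈ e)
    (hd : v ∈ ndirty G S t) : e ∈ nEdgeDirty G S t := ⟨he, v, hv, hd⟩

lemma nEdgeDirty_zero : nEdgeDirty G S 0 = G.edgeSet := by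
  ext e
  refine ⟨fun h => h.1, fun h => ⟨h, ?_⟩⟩
  induction e using Sym2.ind with
  | _ a b => exact ⟨a, by simp, by rw [ndirty_zero]; trivial⟩

lemma nEdgeDirty_subset : nEdgeDirty G S t ⊆ G.edgeSet := fun _ h => h.1

lemma nEdgeDirty_mono (h : ndirty G S (t+1) ⊆ ndirty G S t) :
    nEdgeDirty G S (t+1) ⊆ nEdgeDirty G S t := by
  rintro e ⟨he, v, hv, hd⟩
  exact ⟨he, v, hv, h hd⟩

lemma edge_eq_of_two_mem {e : Sym2 V} (he : e ∈ G.edgeSet) {x w : V}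
    (hx : x ∈ e) (hw : w ∈ e) (hne : x ≠ w) : e = s(x, w) := by
  induction e using Sym2.ind with
  | _ a b =>
    rcases Sym2.mem_iff.1 hx with rfl | rfl
    · rcases Sym2.mem_iff.1 hw with rfl | rfl
      · exact absurd rfl hne
      · rfl
    · rcases Sym2.mem_iff.1 hw with rfl | rfl
      · exact Sym2.eq_swap
      · exact absurd rfl hne

lemma eclear_eq_nclear {S' : ℕ → GMove V} {τ : ℕ}
    (hc : G.Connected) (hne : G.edgeSet.Nonempty) (ht : 1 ≤ t)
    (hed : edirty G S' τ = nEdgeDirty G S t)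
    (h1 : ∀ x, occ S' τ x ≠ 0 → x ∉ ndirty G S t)
    (h2 : ∀ x, occ S' τ x = 0 → occ S t x = 0) :
    eclearSubgraph G S' τ = nclearSubgraph G S t := by
  have hadjiff : ∀ a b : V, (eclearSubgraph G S' τ).Adj a b ↔ (nclearSubgraph G S t).Adj a b := by
    intro a b
    constructor
    · rintro ⟨hab, heE, hecl⟩
      rw [hed] at hecl
      refine ⟨hab, ?_, ?_⟩
      · exact fun hd => hecl (mem_nEdgeDirty heE (Sym2.mem_mk_left _ _) hd)
      · exact fun hd => hecl (mem_nEdgeDirty heE (Sym2.mem_mk_right _ _) hd)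
    · rintro ⟨hab, ha, hb⟩
      refine ⟨hab, G.mem_edgeSet.2 hab, ?_⟩
      rw [hed]
      rintro ⟨heE, w, hwe, hwd⟩
      rcases Sym2.mem_iff.1 hwe with rfl | rfl
      · exact ha hwd
      · exact hb hwd
  apply SimpleGraph.Subgraph.ext
  · ext x
    show (x ∉ edirtyNode G S' τ ∨ _) ↔ x ∈ (ndirty G S t)ᶜ
    constructor
    · rintro (hx | ⟨e, he, hxe⟩)
      · intro hxd
        apply hx
        have hocc : occ S' τ x = 0 := by
          by_contra h
          exact (h1 x h) hxd
        refine ⟨hocc, ?_⟩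
        obtain ⟨x', hxx'⟩ := exists_adj hc hne x
        refine ⟨s(x,x'), ?_, Sym2.mem_mk_left _ _⟩
        rw [hed]
        exact mem_nEdgeDirty (G.mem_edgeSet.2 hxx') (Sym2.mem_mk_left _ _) hxd
      · intro hxd
        rw [hed] at he
        exact he.2 (mem_nEdgeDirty he.1 hxe hxd)
    · intro hx
      left
      rintro ⟨h0, e, he, hxe⟩
      rw [hed] at he
      obtain ⟨heE, w, hwe, hwd⟩ := he
      have hxw : x ≠ w := fun h => hx (h ▸ hwd)
      have hee : e = s(x, w) := edge_eq_of_two_mem heE hxe hwe hxw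
      have hAdj : G.Adj x w := G.mem_edgeSet.1 (hee ▸ heE)
      apply hx
      refine ndirty_extend' ht hwd (.cons hAdj .nil) ?_
      intro z hz
      have hz' : z = x ∨ z = w := by simpa using hz
      rcases hz' with rfl | rfl
      · exact h2 z h0
      · exact occ_eq_zero_of_mem_ndirty ht hwd
  · funext a b
    exact propext (hadjiff a b)

end NodeStruct

section NEHelpers
open SimpleGraph
variable {V : Type*} {G : SimpleGraph V} {S : ℕ → GMove V} {t n : ℕ}

lemma walk_snoc_prop {P : V → Prop} {y q q' : V} (p : G.Walk y q) (h : G.Adj q q')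
    (hp : ∀ z ∈ p.support, P z) (hq' : P q') :
    ∀ z ∈ (p.append (.cons h .nil)).support, P z := by
  intro z hz
  rw [SimpleGraph.Walk.support_append] at hz
  rcases List.mem_append.1 hz with h1 | h1
  · exact hp z h1
  · have : z = q' := by simpa using h1
    subst this
    exact hq'

lemma edge_other_mem {e : Sym2 V} (he : e ∈ G.edgeSet) {v : V} (hv : v ∈ e) :
    ∃ x, e = s(v,x) ∧ G.Adj v x := by
  induction e using Sym2.ind with
  | _ a b =>
    rcases Sym2.mem_iff.1 hv with rfl | rfl
    · exact ⟨b, rfl, he⟩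
    · exact ⟨a, Sym2.eq_swap, (G.mem_edgeSet.1 he).symm⟩

/-- Recontaminated edges at a simulated step have an endpoint that is n-dirty at the
next node-game time. -/
lemma recontam_step {S' : ℕ → GMove V} {τ : ℕ}
    (hoccp : occ S' (τ+1) = occ S (n+1))
    (hed : edirty G S' τ = nEdgeDirty G S n)
    (hguard : ∀ w, w ∈ ndirty G S n → occ S (n+1) w ≠ 0 →
        ∀ x, G.Adj x w → x ∉ ndirty G S n → (S' τ).traversed = some s(x, w)) :
    ∀ e ∈ { e | ∃ x y q q', e = s(x, y) ∧ G.Adj x y ∧ G.Adj q q' ∧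
          (s(q, q') ∈ edirty G S' τ ∧ (S' τ).traversed ≠ some s(q, q')) ∧
          ∃ p : G.Walk y q, ∀ z ∈ p.support, occ S' (τ + 1) z = 0 },
      e ∈ nEdgeDirty G S (n+1) := by
  rintro e ⟨x, y, q, q', rfl, hxy, hqq, ⟨hdirt, hnt⟩, p, hp⟩
  rw [hed] at hdirt
  obtain ⟨heE, w, hwe, hwd⟩ := hdirt
  have hp' : ∀ z ∈ p.support, occ S (n+1) z = 0 := by
    intro z hz
    rw [← hoccp]
    exact hp z hz
  have hyD : y ∈ ndirty G S (n+1) := by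
    rcases Sym2.mem_iff.1 hwe with rfl | rfl
    · exact mem_ndirty_succ hwd p hp'
    · by_cases hq : q ∈ ndirty G S n
      · exact mem_ndirty_succ hq p hp'
      · by_cases hocc : occ S (n+1) w = 0
        · refine mem_ndirty_succ hwd (p.append (.cons hqq .nil)) ?_
          exact walk_snoc_prop p hqq hp' hocc
        · exact absurd (hguard w hwd hocc q hqq hq) hnt
  exact mem_nEdgeDirty (G.mem_edgeSet.2 hxy) (Sym2.mem_mk_right _ _) hyD

/-- Recontaminated edges at a mid-chunk step (occupancy only increased) stay in
the current dirty-edge set. -/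
lemma recontam_mid {S' : ℕ → GMove V} {τ : ℕ} (hn1 : 1 ≤ n)
    (hocc_ge : ∀ x, occ S' (τ+1) x = 0 → occ S n x = 0)
    (hed : edirty G S' τ = nEdgeDirty G S n) :
    ∀ e ∈ { e | ∃ x y q q', e = s(x, y) ∧ G.Adj x y ∧ G.Adj q q' ∧
          (s(q, q') ∈ edirty G S' τ ∧ (S' τ).traversed ≠ some s(q, q')) ∧
          ∃ p : G.Walk y q, ∀ z ∈ p.support, occ S' (τ + 1) z = 0 },
      e ∈ nEdgeDirty G S n := by
  rintro e ⟨x, y, q, q', rfl, hxy, hqq, ⟨hdirt, hnt⟩, p, hp⟩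
  rw [hed] at hdirt
  obtain ⟨heE, w, hwe, hwd⟩ := hdirt
  have hp' : ∀ z ∈ p.support, occ S n z = 0 := fun z hz => hocc_ge z (hp z hz)
  have hyD : y ∈ ndirty G S n := by
    rcases Sym2.mem_iff.1 hwe with rfl | rfl
    · exact ndirty_extend' hn1 hwd p hp'
    · by_cases hq : q ∈ ndirty G S n
      · exact ndirty_extend' hn1 hq p hp'
      · refine ndirty_extend' hn1 hwd (p.append (.cons hqq .nil)) ?_
        exact walk_snoc_prop p hqq hp' (occ_eq_zero_of_mem_ndirty hn1 hwd)
  exact mem_nEdgeDirty (G.mem_edgeSet.2 hxy) (Sym2.mem_mk_right _ _) hyD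

end NEHelpers

section EdgeOfNode
open SimpleGraph
variable {V : Type*} {G : SimpleGraph V} {S : ℕ → GMove V}

theorem edgeOfNodeAux (hT : G.IsTree) (hne : G.edgeSet.Nonempty) {k Tf : ℕ} {z : V}
    (hL : Legal G S) (hI : Internal S)
    (hmono : ∀ t < Tf, ndirty G S (t+1) ⊆ ndirty G S t)
    (hconn : ∀ t, 1 ≤ t → t ≤ Tf → (nclearSubgraph G S t).Connected)
    (hTfn : ndirty G S Tf = ∅) (hsn : ∀ t ≤ Tf, sn S t ≤ k)
    (hjunk : ∀ t, Tf ≤ t → S t = GMove.place z) :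
    ∃ (S' : ℕ → GMove V) (Tf' : ℕ), Legal G S' ∧ Internal S' ∧
      (∀ t < Tf', edirty G S' (t+1) ⊆ edirty G S' t) ∧
      (∀ t, 1 ≤ t → t ≤ Tf' → (eclearSubgraph G S' t).Connected) ∧
      edirty G S' Tf' = ∅ ∧ ∀ t ≤ Tf', sn S' t ≤ k := by
  classical
  obtain ⟨v₀, hv₀⟩ := first_move_place hL hI
  have hTfpos : 1 ≤ Tf := by
    rcases Nat.eq_zero_or_pos Tf with h | h
    · exfalso
      rw [h, ndirty_zero] at hTfn
      obtain ⟨e, he⟩ := hne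
      induction e using Sym2.ind with
      | _ a b =>
        have ha : a ∈ (Set.univ : Set V) := trivial
        rw [hTfn] at ha
        exact ha
    · exact h
  set DP : ℕ → Prop := fun t => t < Tf ∧ ∃ vcp : V × V, S t = GMove.place vcp.1 ∧
    vcp.1 ∈ ndirty G S t ∧ G.Adj vcp.2 vcp.1 ∧ vcp.2 ∉ ndirty G S t with hDPdef
  have hDPex : ∀ t, DP t → ∃ vcp : V × V, S t = GMove.place vcp.1 ∧
      vcp.1 ∈ ndirty G S t ∧ G.Adj vcp.2 vcp.1 ∧ vcp.2 ∉ ndirty G S t := fun t h => h.2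
  choose vc hvc1 hvc2 hvc3 hvc4 using hDPex
  have hDPlt : ∀ t, DP t → t < Tf := fun t h => h.1
  have hDPpos : ∀ t (h : DP t), 1 ≤ t := by
    intro t h
    rcases Nat.eq_zero_or_pos t with rfl | h2
    · exact absurd (by rw [ndirty_zero]; trivial) (hvc4 0 h)
    · exact h2
  set two : ℕ → Bool := fun t => if DP t then true else false with htwodef
  have htwo : ∀ t, two t = true ↔ DP t := by
    intro t
    by_cases h : DP t <;> simp [htwodef, h]
  set S' : ℕ → GMove V := fun n =>
    match dil two n with
    | (t, false) => if h : DP t then GMove.place (vc t h).2 else S t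
    | (t, true) => if h : DP t then GMove.slide (vc t h).2 (vc t h).1 else S t
    with hS'def
  have hS'b : ∀ t, S' (dtime two t) = if h : DP t then GMove.place (vc t h).2 else S t := by
    intro t
    show (match dil two (dtime two t) with
      | (t, false) => if h : DP t then GMove.place (vc t h).2 else S t
      | (t, true) => if h : DP t then GMove.slide (vc t h).2 (vc t h).1 else S t) = _
    rw [dil_spec]
  have hS'm : ∀ t (h : DP t), S' (dtime two t + 1) = GMove.slide (vc t h).2 (vc t h).1 := by
    intro t h
    show (match dil two (dtime two t + 1) with
      | (t, false) => if h : DP t then GMove.place (vc t h).2 else S t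
      | (t, true) => if h : DP t then GMove.slide (vc t h).2 (vc t h).1 else S t) = _
    rw [dil_spec2 two t ((htwo t).2 h)]
    exact dif_pos h
  have hdt2 : ∀ t, DP t → dtime two (t+1) = dtime two t + 2 := by
    intro t h
    rw [dtime_succ, if_pos ((htwo t).2 h)]
  have hdt1 : ∀ t, ¬DP t → dtime two (t+1) = dtime two t + 1 := by
    intro t h
    rw [dtime_succ, if_neg (fun hc => h ((htwo t).1 hc))]
  -- mid-chunk state facts, given boundary facts
  have midstate : ∀ t (h : DP t),
      occ S' (dtime two t) = occ S t →
      edirty G S' (dtime two t) = nEdgeDirty G S t →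
      sn S' (dtime two t) = sn S t →
      (∀ x, occ S' (dtime two t + 1) x = if x = (vc t h).2 then occ S t x + 1 else occ S t x) ∧
      edirty G S' (dtime two t + 1) = nEdgeDirty G S t ∧
      sn S' (dtime two t + 1) = sn S t + 1 := by
    intro t h ho he hs
    have hmv1 : S' (dtime two t) = GMove.place (vc t h).2 := (hS'b t).trans (dif_pos h)
    have hoccmid : ∀ x, occ S' (dtime two t + 1) x =
        if x = (vc t h).2 then occ S t x + 1 else occ S t x := by
      intro x
      rw [occ_succ_place hmv1, ho]
    refine ⟨hoccmid, ?_, ?_⟩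
    · refine le_antisymm ?_ ?_
      · rw [edirty_succ]
        rintro e (⟨heD, _⟩ | hrec)
        · rw [he] at heD; exact heD
        · refine recontam_mid (hDPpos t h) ?_ he e hrec
          intro x hx
          rw [hoccmid x] at hx
          by_cases hxc : x = (vc t h).2
          · rw [if_pos hxc] at hx; omega
          · rw [if_neg hxc] at hx; exact hx
      · intro e heD
        rw [← he] at heD
        apply mem_edirty_succ_left heD
        rw [hmv1, traversed_place]
        simp
    · rw [sn_succ, hmv1, hs]
  -- node-game facts per move
  have hstay_ne : ∀ {n : ℕ} {w v : V}, 1 ≤ n → S n = GMove.place v → w ∈ ndirty G S n →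
      w ≠ v → w ∈ ndirty G S (n+1) := by
    intro n w v hn1 hpl hw hwv
    apply ndirty_stay hw
    rw [occ_unchanged_place hpl hwv]
    exact occ_eq_zero_of_mem_ndirty hn1 hw
  have hstay_sl : ∀ {n : ℕ} {w u v : V}, 1 ≤ n → S n = GMove.slide u v → w ∈ ndirty G S n →
      w ≠ v → w ∈ ndirty G S (n+1) := by
    intro n w u v hn1 hsl hw hwv
    have hw0 : occ S n w = 0 := occ_eq_zero_of_mem_ndirty hn1 hw
    have hwu : w ≠ u := by
      intro h
      have h2 := (legal_slide hL hsl).2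
      rw [h] at hw0
      omega
    apply ndirty_stay hw
    rw [occ_unchanged_slide hsl hwv hwu]
    exact hw0
  -- uniqueness of the clear neighbour of a dirty vertex
  have huniq : ∀ {n : ℕ}, 1 ≤ n → n ≤ Tf → ∀ {v x y : V}, v ∈ ndirty G S n →
      G.Adj x v → x ∉ ndirty G S n → G.Adj y v → y ∉ ndirty G S n → x = y := by
    intro n hn1 hnTf v x y hv hx hxc hy hyc
    exact subgraph_unique_nbr hT (hconn n hn1 hnTf) (fun hc => hc hv) hxc hyc hx.symm hy.symm
  -- the master invariant
  have master : ∀ t ≤ Tf,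
      occ S' (dtime two t) = occ S t ∧ sn S' (dtime two t) = sn S t ∧
      edirty G S' (dtime two t) = nEdgeDirty G S t := by
    intro t
    induction t with
    | zero =>
      intro _
      refine ⟨rfl, rfl, ?_⟩
      show edirty G S' 0 = _
      rw [edirty_zero, nEdgeDirty_zero]
    | succ n ihn =>
      intro hle
      obtain ⟨ho, hs, hedn⟩ := ihn (by omega)
      have hnTf : n < Tf := by omega
      by_cases hDP : DP n
      · -- doubled chunk : place at the clear neighbour, then slide in
        have hn1 : 1 ≤ n := hDPpos n hDP
        obtain ⟨hoccmid, hedmid, hsnmid⟩ := midstate n hDP ho hedn hs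
        have hpl := hvc1 n hDP
        have hvdirty := hvc2 n hDP
        have hadj := hvc3 n hDP
        have hcclear := hvc4 n hDP
        have hmv2 := hS'm n hDP
        have hvne : (vc n hDP).1 ≠ (vc n hDP).2 := (G.ne_of_adj hadj).symm
        have hdt := hdt2 n hDP
        have hoccfin : occ S' (dtime two n + 2) = occ S (n+1) := by
          funext x
          rw [show dtime two n + 2 = (dtime two n + 1) + 1 from rfl,
            occ_succ_slide hmv2, occ_succ_place hpl, hoccmid x]
          by_cases hxv : x = (vc n hDP).1
          · have hxc : ¬ x = (vc n hDP).2 := by rw [hxv]; exact hvne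
            simp only [if_pos hxv, if_neg hxc]
          · by_cases hxc : x = (vc n hDP).2
            · simp only [if_neg hxv, if_pos hxc]
              omega
            · simp only [if_neg hxv, if_neg hxc]
        have hsnfin : sn S' (dtime two n + 2) = sn S (n+1) := by
          rw [show dtime two n + 2 = (dtime two n + 1) + 1 from rfl,
            sn_succ, hmv2, hsnmid, sn_succ, hpl]
        have hndset : ndirty G S (n+1) = ndirty G S n \ {(vc n hDP).1} := by
          apply le_antisymm
          · intro w hw
            refine ⟨hmono n hnTf hw, fun hwv => ?_⟩
            have h1 := occ_eq_zero_of_mem_ndirty (by omega) hw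
            rw [Set.mem_singleton_iff.1 hwv] at h1
            have h2 := occ_target_place hpl
            omega
          · rintro w ⟨hw, hwv⟩
            exact hstay_ne hn1 hpl hw (by simpa using hwv)
        have hguard : ∀ w, w ∈ ndirty G S n → occ S (n+1) w ≠ 0 →
            ∀ x, G.Adj x w → x ∉ ndirty G S n →
            (S' (dtime two n + 1)).traversed = some s(x, w) := by
          intro w hw hocc x hxw hxc
          have hw0 : occ S n w = 0 := occ_eq_zero_of_mem_ndirty hn1 hw
          have hwv : w = (vc n hDP).1 := by
            by_contra hne'
            rw [occ_unchanged_place hpl hne'] at hocc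
            exact hocc hw0
          subst hwv
          have hxc2 : x = (vc n hDP).2 := huniq hn1 (by omega) hw hxw hxc hadj hcclear
          rw [hmv2, traversed_slide, hxc2]
        have hedfin : edirty G S' (dtime two n + 2) = nEdgeDirty G S (n+1) := by
          refine le_antisymm ?_ ?_
          · rw [show dtime two n + 2 = (dtime two n + 1) + 1 from rfl, edirty_succ]
            rintro e (⟨heD, hnt⟩ | hrec)
            · rw [hedmid] at heD
              obtain ⟨heE, w, hwe, hwd⟩ := heD
              by_cases hwv : w = (vc n hDP).1
              · obtain ⟨x, hee, hAdjwx⟩ := edge_other_mem heE hwe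
                by_cases hx : x ∈ ndirty G S n
                · have hxv : x ≠ (vc n hDP).1 := by
                    rw [← hwv]
                    exact (G.ne_of_adj hAdjwx).symm
                  have hx1 : x ∈ ndirty G S (n+1) := by
                    rw [hndset]; exact ⟨hx, by simpa using hxv⟩
                  exact mem_nEdgeDirty heE (by rw [hee]; exact Sym2.mem_mk_right _ _) hx1
                · have hxc : x = (vc n hDP).2 :=
                    huniq hn1 (by omega) (hwv ▸ hwd) (hwv ▸ hAdjwx.symm) hx hadj hcclear
                  exfalso
                  apply hnt
                  rw [hmv2, traversed_slide, hee, hxc, hwv]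
                  exact congrArg some Sym2.eq_swap
              · have hw1 : w ∈ ndirty G S (n+1) := by
                  rw [hndset]; exact ⟨hwd, by simpa using hwv⟩
                exact mem_nEdgeDirty heE hwe hw1
            · have hoccfin' : occ S' ((dtime two n + 1) + 1) = occ S (n+1) := hoccfin
              exact recontam_step hoccfin' hedmid hguard e hrec
          · intro e heD
            have heDn : e ∈ nEdgeDirty G S n := nEdgeDirty_mono (hmono n hnTf) heD
            rw [← hedmid] at heDn
            apply mem_edirty_succ_left heDn
            rw [hmv2, traversed_slide]
            intro hcon
            have hee := Option.some.inj hcon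
            obtain ⟨heE, w, hwe, hwd⟩ := heD
            rw [← hee] at hwe
            have hw' : w = (vc n hDP).2 ∨ w = (vc n hDP).1 := by
              rcases Sym2.mem_iff.1 hwe with h | h
              · exact Or.inl h
              · exact Or.inr h
            rcases hw' with rfl | rfl
            · exact hcclear (hmono n hnTf hwd)
            · rw [hndset] at hwd
              exact hwd.2 rfl
        rw [hdt]
        exact ⟨hoccfin, hsnfin, hedfin⟩
      · -- single chunk
        have hdt := hdt1 n hDP
        have hmv : S' (dtime two n) = S n := (hS'b n).trans (dif_neg hDP)
        have hoccfin : occ S' (dtime two n + 1) = occ S (n+1) := by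
          rw [occ_succ, occ_succ, hmv, ho]
        have hsnfin : sn S' (dtime two n + 1) = sn S (n+1) := by
          rw [sn_succ, sn_succ, hmv, hs]
        rw [hdt]
        refine ⟨hoccfin, hsnfin, ?_⟩
        rcases move_cases hI n with ⟨v, hpl⟩ | ⟨u, v, hsl⟩
        · -- place
          rcases Nat.eq_zero_or_pos n with rfl | hn1
          · -- first move
            have hED1 : edirty G S' (0 + 1) = G.edgeSet := by
              refine edirty_succ_eq_univ_of_place ?_ (by rw [show dtime two 0 = 0 from rfl] at hmv; exact hmv.trans hpl)
              exact edirty_zero G S'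
            have hD1 : nEdgeDirty G S 1 = G.edgeSet := by
              refine le_antisymm nEdgeDirty_subset ?_
              intro e he
              induction e using Sym2.ind with
              | _ a b =>
                have hab : G.Adj a b := G.mem_edgeSet.1 he
                have hne' : a ≠ b := G.ne_of_adj hab
                by_cases hav : a = v
                · refine mem_nEdgeDirty he (Sym2.mem_mk_right _ _) ?_
                  apply ndirty_stay (by rw [ndirty_zero]; trivial)
                  rw [occ_unchanged_place hpl (by rw [hav] at hne'; exact hne'.symm)]
                  rfl
                · refine mem_nEdgeDirty he (Sym2.mem_mk_left _ _) ?_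
                  apply ndirty_stay (by rw [ndirty_zero]; trivial)
                  rw [occ_unchanged_place hpl hav]
                  rfl
            rw [show dtime two 0 = 0 from rfl, hED1, hD1]
          · -- later place: the target must be clear
            have hvclear : v ∉ ndirty G S n := by
              intro hvd
              apply hDP
              refine ⟨hnTf, ?_⟩
              have hv₀1 : v₀ ∉ ndirty G S 1 := by
                intro hc
                have h1 := occ_eq_zero_of_mem_ndirty (le_refl 1) hc
                have h2 : 0 < occ S 1 v₀ := occ_target_place hv₀
                omega
              have ha₀ : v₀ ∉ ndirty G S n := fun hc => hv₀1 (ndirty_anti hmono hn1 (by omega) hc)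
              have ha₀' : v₀ ∉ ndirty G S (n+1) := fun hc => ha₀ (hmono n hnTf hc)
              have hvmem : v ∉ ndirty G S (n+1) := by
                intro hc
                have h1 := occ_eq_zero_of_mem_ndirty (by omega) hc
                have h2 := occ_target_place hpl
                omega
              obtain ⟨p, hsup, hpe⟩ := subgraph_walk (hconn (n+1) (by omega) (by omega))
                (show v ∈ (nclearSubgraph G S (n+1)).verts from hvmem) ha₀'
              rcases walk_head_cases p hpe with heq | ⟨x, hAdj⟩
              · exact absurd (heq ▸ hvd) ha₀
              · have hAdj' : (nclearSubgraph G S (n+1)).Adj v x :=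
                  (SimpleGraph.Subgraph.mem_edgeSet).1 ((SimpleGraph.Subgraph.mem_edgeSet).2 hAdj)
                obtain ⟨hGvx, _, hxnd1⟩ := hAdj'
                have hxv : x ≠ v := (G.ne_of_adj hGvx).symm
                have hxclear : x ∉ ndirty G S n := by
                  intro hxd
                  exact hxnd1 (hstay_ne hn1 hpl hxd hxv)
                exact ⟨(v, x), hpl, hvd, hGvx.symm, hxclear⟩
            have hndeq : ndirty G S (n+1) = ndirty G S n := by
              apply le_antisymm (hmono n hnTf)
              intro w hw
              exact hstay_ne hn1 hpl hw (fun h => hvclear (h ▸ hw))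
            have hDeq : nEdgeDirty G S (n+1) = nEdgeDirty G S n := by
              unfold nEdgeDirty
              rw [hndeq]
            have hguard : ∀ w, w ∈ ndirty G S n → occ S (n+1) w ≠ 0 →
                ∀ x, G.Adj x w → x ∉ ndirty G S n →
                (S' (dtime two n)).traversed = some s(x, w) := by
              intro w hw hocc x _ _
              exfalso
              have hw0 : occ S n w = 0 := occ_eq_zero_of_mem_ndirty hn1 hw
              have hwv : w ≠ v := fun h => hvclear (h ▸ hw)
              rw [occ_unchanged_place hpl hwv] at hocc
              exact hocc hw0
            refine le_antisymm ?_ ?_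
            · rw [edirty_succ]
              rintro e (⟨heD, _⟩ | hrec)
              · rw [hedn] at heD
                rw [hDeq]
                exact heD
              · exact recontam_step hoccfin hedn hguard e hrec
            · intro e heD
              rw [hDeq, ← hedn] at heD
              apply mem_edirty_succ_left heD
              rw [hmv, hpl, traversed_place]
              simp
        · -- slide
          have hn1 : 1 ≤ n := by
            rcases Nat.eq_zero_or_pos n with rfl | h
            · have h2 := (legal_slide hL hsl).2
              rw [occ_zero] at h2
              simp at h2
            · exact h
          have hAdjuv := (legal_slide hL hsl).1
          have hoccu := (legal_slide hL hsl).2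
          have huclear : u ∉ ndirty G S n := by
            intro hc
            have := occ_eq_zero_of_mem_ndirty hn1 hc
            omega
          by_cases hvd : v ∈ ndirty G S n
          · -- extending slide
            have hndset : ndirty G S (n+1) = ndirty G S n \ {v} := by
              apply le_antisymm
              · intro w hw
                refine ⟨hmono n hnTf hw, fun hwv => ?_⟩
                have h1 := occ_eq_zero_of_mem_ndirty (by omega) hw
                rw [Set.mem_singleton_iff.1 hwv] at h1
                have h2 := occ_target_slide hsl
                omega
              · rintro w ⟨hw, hwv⟩
                exact hstay_sl hn1 hsl hw (by simpa using hwv)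
            have hguard : ∀ w, w ∈ ndirty G S n → occ S (n+1) w ≠ 0 →
                ∀ x, G.Adj x w → x ∉ ndirty G S n →
                (S' (dtime two n)).traversed = some s(x, w) := by
              intro w hw hocc x hxw hxc
              have hw0 : occ S n w = 0 := occ_eq_zero_of_mem_ndirty hn1 hw
              have hwu : w ≠ u := fun h => huclear (h ▸ hw)
              have hwv : w = v := by
                by_contra hne'
                rw [occ_unchanged_slide hsl hne' hwu] at hocc
                exact hocc hw0
              subst hwv
              have hxu : x = u := huniq hn1 (by omega) hw hxw hxc hAdjuv huclear
              rw [hmv, hsl, traversed_slide, hxu]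
            refine le_antisymm ?_ ?_
            · rw [edirty_succ]
              rintro e (⟨heD, hnt⟩ | hrec)
              · rw [hedn] at heD
                obtain ⟨heE, w, hwe, hwd⟩ := heD
                by_cases hwv : w = v
                · subst hwv
                  obtain ⟨x, hee, hAdjwx⟩ := edge_other_mem heE hwe
                  by_cases hx : x ∈ ndirty G S n
                  · have hxv : x ≠ w := (G.ne_of_adj hAdjwx).symm
                    have hx1 : x ∈ ndirty G S (n+1) := by
                      rw [hndset]; exact ⟨hx, by simpa using hxv⟩
                    exact mem_nEdgeDirty heE (by rw [hee]; exact Sym2.mem_mk_right _ _) hx1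
                  · have hxu : x = u := huniq hn1 (by omega) hwd hAdjwx.symm hx hAdjuv huclear
                    exfalso
                    apply hnt
                    rw [hmv, hsl, traversed_slide, hee, hxu]
                    exact congrArg some Sym2.eq_swap
                · have hw1 : w ∈ ndirty G S (n+1) := by
                    rw [hndset]; exact ⟨hwd, by simpa using hwv⟩
                  exact mem_nEdgeDirty heE hwe hw1
              · exact recontam_step hoccfin hedn hguard e hrec
            · intro e heD
              have heDn : e ∈ nEdgeDirty G S n := nEdgeDirty_mono (hmono n hnTf) heD
              rw [← hedn] at heDn
              apply mem_edirty_succ_left heDn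
              rw [hmv, hsl, traversed_slide]
              intro hcon
              have hee := Option.some.inj hcon
              obtain ⟨heE, w, hwe, hwd⟩ := heD
              rw [← hee] at hwe
              rcases Sym2.mem_iff.1 hwe with rfl | rfl
              · exact huclear (hmono n hnTf hwd)
              · rw [hndset] at hwd
                exact hwd.2 rfl
          · -- internal slide
            have hndeq : ndirty G S (n+1) = ndirty G S n := by
              apply le_antisymm (hmono n hnTf)
              intro w hw
              exact hstay_sl hn1 hsl hw (fun h => hvd (h ▸ hw))
            have hDeq : nEdgeDirty G S (n+1) = nEdgeDirty G S n := by
              unfold nEdgeDirty; rw [hndeq]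
            have hguard : ∀ w, w ∈ ndirty G S n → occ S (n+1) w ≠ 0 →
                ∀ x, G.Adj x w → x ∉ ndirty G S n →
                (S' (dtime two n)).traversed = some s(x, w) := by
              intro w hw hocc x _ _
              exfalso
              have hw0 : occ S n w = 0 := occ_eq_zero_of_mem_ndirty hn1 hw
              have hwu : w ≠ u := fun h => huclear (h ▸ hw)
              have hwv : w ≠ v := fun h => hvd (h ▸ hw)
              rw [occ_unchanged_slide hsl hwv hwu] at hocc
              exact hocc hw0
            refine le_antisymm ?_ ?_
            · rw [edirty_succ]
              rintro e (⟨heD, _⟩ | hrec)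
              · rw [hedn] at heD
                rw [hDeq]
                exact heD
              · exact recontam_step hoccfin hedn hguard e hrec
            · intro e heD
              rw [hDeq] at heD
              have heDn := heD
              rw [← hedn] at heDn
              apply mem_edirty_succ_left heDn
              rw [hmv, hsl, traversed_slide]
              intro hcon
              have hee := Option.some.inj hcon
              obtain ⟨heE, w, hwe, hwd⟩ := heD
              rw [← hee] at hwe
              rcases Sym2.mem_iff.1 hwe with rfl | rfl
              · exact huclear hwd
              · exact hvd hwd
  -- final assembly
  have hDTf : nEdgeDirty G S Tf = ∅ := by
    ext e
    simp only [Set.mem_empty_iff_false, iff_false]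
    rintro ⟨heE, w, hwe, hwd⟩
    rw [hTfn] at hwd
    exact hwd
  have htTf_of_le : ∀ {τ t : ℕ}, τ ≤ dtime two Tf → τ = dtime two t → t ≤ Tf := by
    intro τ t hle heq
    by_contra hc
    have h1 : dtime two (Tf+1) ≤ dtime two t := dtime_mono two (by omega)
    have h2 : dtime two Tf < dtime two (Tf+1) := by
      rw [dtime_succ]
      by_cases h : two Tf <;> simp [h]
    omega
  refine ⟨S', dtime two Tf, ?_, ?_, ?_, ?_, ?_, ?_⟩
  · -- Legal
    intro nn
    rcases hdd : dil two nn with ⟨t, b⟩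
    cases b with
    | false =>
      have hnn : nn = dtime two t := (dil_inv two nn).1 t hdd
      have hSm : S' nn = if h : DP t then GMove.place (vc t h).2 else S t := by
        rw [hnn]; exact hS'b t
      by_cases h : DP t
      · rw [hSm.trans (dif_pos h)]
        trivial
      · have hSm' : S' nn = S t := hSm.trans (dif_neg h)
        by_cases htTf : t ≤ Tf
        · rcases move_cases hI t with ⟨v, hv⟩ | ⟨u, v, hv⟩
          · rw [hSm'.trans hv]; trivial
          · rw [hSm'.trans hv]
            refine ⟨(legal_slide hL hv).1, ?_⟩
            rw [hnn, (master t htTf).1]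
            exact (legal_slide hL hv).2
        · rw [hSm'.trans (hjunk t (by omega))]; trivial
    | true =>
      obtain ⟨htt, hnn⟩ := (dil_inv two nn).2 t hdd
      have h : DP t := (htwo t).1 htt
      have hSm : S' nn = GMove.slide (vc t h).2 (vc t h).1 := by rw [hnn]; exact hS'm t h
      rw [hSm]
      refine ⟨hvc3 t h, ?_⟩
      obtain ⟨ho, hs, he⟩ := master t (le_of_lt (hDPlt t h))
      obtain ⟨hoccmid, _, _⟩ := midstate t h ho he hs
      rw [hnn, hoccmid, if_pos rfl]
      omega
  · -- Internal
    intro nn w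
    rcases hdd : dil two nn with ⟨t, b⟩
    cases b with
    | false =>
      have hnn : nn = dtime two t := (dil_inv two nn).1 t hdd
      have hSm : S' nn = if h : DP t then GMove.place (vc t h).2 else S t := by
        rw [hnn]; exact hS'b t
      by_cases h : DP t
      · rw [hSm.trans (dif_pos h)]
        exact fun hc => (by cases hc)
      · rw [hSm.trans (dif_neg h)]
        exact hI t w
    | true =>
      obtain ⟨htt, hnn⟩ := (dil_inv two nn).2 t hdd
      have h : DP t := (htwo t).1 htt
      have hSm : S' nn = GMove.slide (vc t h).2 (vc t h).1 := by rw [hnn]; exact hS'm t h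
      rw [hSm]
      exact fun hc => (by cases hc)
  · -- monotone
    intro τ hτ
    rcases hdd : dil two τ with ⟨t, b⟩
    have htTf : t < Tf := by
      by_contra hc
      have h1 : dtime two Tf ≤ dtime two t := dtime_mono two (by omega)
      cases b with
      | false =>
        have := (dil_inv two τ).1 t hdd
        omega
      | true =>
        have := ((dil_inv two τ).2 t hdd).2
        omega
    cases b with
    | false =>
      have hnn : τ = dtime two t := (dil_inv two τ).1 t hdd
      obtain ⟨ho, hs, he⟩ := master t (by omega)
      by_cases h : DP t
      · obtain ⟨_, hedmid, _⟩ := midstate t h ho he hs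
        rw [hnn, hedmid, he]
      · have hdt := hdt1 t h
        obtain ⟨_, _, he'⟩ := master (t+1) (by omega)
        rw [hnn, show dtime two t + 1 = dtime two (t+1) from hdt.symm, he', he]
        exact nEdgeDirty_mono (hmono t htTf)
    | true =>
      obtain ⟨htt, hnn⟩ := (dil_inv two τ).2 t hdd
      have h : DP t := (htwo t).1 htt
      obtain ⟨ho, hs, he⟩ := master t (by omega)
      obtain ⟨_, hedmid, _⟩ := midstate t h ho he hs
      obtain ⟨_, _, he'⟩ := master (t+1) (by omega)
      have hd2 : dtime two t + 1 + 1 = dtime two (t+1) := by rw [hdt2 t h]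
      rw [hnn, hd2, he', hedmid]
      exact nEdgeDirty_mono (hmono t htTf)
  · -- connectivity
    intro τ hτ1 hτ2
    rcases hdd : dil two τ with ⟨t, b⟩
    cases b with
    | false =>
      have hnn : τ = dtime two t := (dil_inv two τ).1 t hdd
      have ht1 : 1 ≤ t := by
        rcases Nat.eq_zero_or_pos t with rfl | h
        · rw [show dtime two 0 = 0 from rfl] at hnn; omega
        · exact h
      have htTf : t ≤ Tf := htTf_of_le hτ2 hnn
      obtain ⟨ho, hs, he⟩ := master t htTf
      have heq := eclear_eq_nclear (S := S) hT.1 hne ht1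
        (show edirty G S' τ = _ by rw [hnn]; exact he)
        (fun x hx => by
          rw [hnn, ho] at hx
          intro hc
          exact hx (occ_eq_zero_of_mem_ndirty ht1 hc))
        (fun x hx => by rw [hnn, ho] at hx; exact hx)
      rw [heq]
      exact hconn t ht1 htTf
    | true =>
      obtain ⟨htt, hnn⟩ := (dil_inv two τ).2 t hdd
      have h : DP t := (htwo t).1 htt
      have ht1 : 1 ≤ t := hDPpos t h
      obtain ⟨ho, hs, he⟩ := master t (le_of_lt (hDPlt t h))
      obtain ⟨hoccmid, hedmid, _⟩ := midstate t h ho he hs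
      have heq := eclear_eq_nclear (S := S) hT.1 hne ht1
        (show edirty G S' τ = _ by rw [hnn]; exact hedmid)
        (fun x hx => by
          rw [hnn, hoccmid x] at hx
          intro hc
          by_cases hxc : x = (vc t h).2
          · exact (hvc4 t h) (hxc ▸ hc)
          · rw [if_neg hxc] at hx
            exact hx (occ_eq_zero_of_mem_ndirty ht1 hc))
        (fun x hx => by
          rw [hnn, hoccmid x] at hx
          by_cases hxc : x = (vc t h).2
          · rw [if_pos hxc] at hx; omega
          · rw [if_neg hxc] at hx; exact hx)
      rw [heq]
      exact hconn t ht1 (by omega)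
  · -- final emptiness
    exact (master Tf le_rfl).2.2.trans hDTf
  · -- searcher bound
    intro τ hτ
    rcases hdd : dil two τ with ⟨t, b⟩
    cases b with
    | false =>
      have hnn : τ = dtime two t := (dil_inv two τ).1 t hdd
      have htTf : t ≤ Tf := htTf_of_le hτ hnn
      rw [hnn, (master t htTf).2.1]
      exact hsn t htTf
    | true =>
      obtain ⟨htt, hnn⟩ := (dil_inv two τ).2 t hdd
      have h : DP t := (htwo t).1 htt
      obtain ⟨ho, hs, he⟩ := master t (le_of_lt (hDPlt t h))
      obtain ⟨_, _, hsnmid⟩ := midstate t h ho he hs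
      rw [hnn, hsnmid]
      have hseq : sn S (t+1) = sn S t + 1 := by rw [sn_succ, hvc1 t h]
      rw [← hseq]
      exact hsn (t+1) (by omega)


end EdgeOfNode

section Final
open SimpleGraph
variable {V : Type*} {G : SimpleGraph V} {S : ℕ → GMove V}

lemma nclear_congr {S2 : ℕ → GMove V} {t : ℕ} (h : ndirty G S t = ndirty G S2 t) :
    nclearSubgraph G S t = nclearSubgraph G S2 t := by
  apply SimpleGraph.Subgraph.ext
  · show (ndirty G S t)ᶜ = (ndirty G S2 t)ᶜ
    rw [h]
  · funext a b
    show (G.Adj a b ∧ a ∉ ndirty G S t ∧ b ∉ ndirty G S t) =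
      (G.Adj a b ∧ a ∉ ndirty G S2 t ∧ b ∉ ndirty G S2 t)
    rw [h]

theorem edgeOfNode (hT : G.IsTree) (hne : G.edgeSet.Nonempty) {k Tf : ℕ}
    (hL : Legal G S) (hI : Internal S)
    (hmono : ∀ t < Tf, ndirty G S (t+1) ⊆ ndirty G S t)
    (hconn : ∀ t, 1 ≤ t → t ≤ Tf → (nclearSubgraph G S t).Connected)
    (hTfn : ndirty G S Tf = ∅) (hsn : ∀ t ≤ Tf, sn S t ≤ k) :
    ∃ (S' : ℕ → GMove V) (Tf' : ℕ), Legal G S' ∧ Internal S' ∧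
      (∀ t < Tf', edirty G S' (t+1) ⊆ edirty G S' t) ∧
      (∀ t, 1 ≤ t → t ≤ Tf' → (eclearSubgraph G S' t).Connected) ∧
      edirty G S' Tf' = ∅ ∧ ∀ t ≤ Tf', sn S' t ≤ k := by
  classical
  have hV : Nonempty V := by
    obtain ⟨e, he⟩ := hne
    induction e using Sym2.ind with
    | _ a b => exact ⟨a⟩
  obtain ⟨z⟩ := hV
  set Sb : ℕ → GMove V := fun t => if t < Tf then S t else GMove.place z with hSbdef
  have hag : ∀ t, t ≤ Tf → ∀ s, s < t → Sb s = S s := by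
    intro t ht s hs
    simp only [hSbdef]
    rw [if_pos (by omega)]
  have hOC : ∀ t ≤ Tf, occ Sb t = occ S t := fun t ht => occ_congr_lt (hag t ht)
  have hND : ∀ t ≤ Tf, ndirty G Sb t = ndirty G S t := fun t ht => ndirty_congr_lt (hag t ht)
  have hSN : ∀ t ≤ Tf, sn Sb t = sn S t := fun t ht => sn_congr_lt (hag t ht)
  have hSbeq : ∀ n, n < Tf → Sb n = S n := by
    intro n hn
    simp only [hSbdef]
    rw [if_pos hn]
  have hSbj : ∀ n, Tf ≤ n → Sb n = GMove.place z := by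
    intro n hn
    simp only [hSbdef]
    rw [if_neg (by omega)]
  refine edgeOfNodeAux hT hne (z := z) ?_ ?_ ?_ ?_ ?_ ?_ hSbj
  · -- Legal
    intro n
    by_cases hn : n < Tf
    · rcases move_cases hI n with ⟨v, hv⟩ | ⟨u, v, hv⟩
      · rw [(hSbeq n hn).trans hv]; trivial
      · rw [(hSbeq n hn).trans hv]
        refine ⟨(legal_slide hL hv).1, ?_⟩
        rw [hOC n (by omega)]
        exact (legal_slide hL hv).2
    · rw [hSbj n (by omega)]; trivial
  · -- Internal
    intro n w
    by_cases hn : n < Tf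
    · rw [hSbeq n hn]; exact hI n w
    · rw [hSbj n (by omega)]; exact fun hc => (by cases hc)
  · -- monotone
    intro t ht
    rw [hND (t+1) (by omega), hND t (by omega)]
    exact hmono t ht
  · -- connectivity
    intro t ht1 ht2
    rw [nclear_congr (hND t ht2)]
    exact hconn t ht1 ht2
  · rw [hND Tf le_rfl]; exact hTfn
  · intro t ht
    rw [hSN t ht]
    exact hsn t ht

end Final

/-- For every tree, the internal monotone connected edge search number equals the
internal monotone connected node search number. -/
theorem stmt7 {V : Type*} (G : SimpleGraph V) (hT : G.IsTree)
    (hne : G.edgeSet.Nonempty) :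
    sEimc G = sNimc G := by
  unfold sEimc sNimc
  congr 1
  ext k
  simp only [Set.mem_setOf_eq]
  constructor
  · rintro ⟨S, Tf, hL, hI, hmono, hconn, hTf, hsn⟩
    obtain ⟨S', Tf', hL', hI', hmono', hconn', hTf', hsn', htame⟩ :=
      tame_surgery hT hne hL hI hmono hconn hTf hsn
    obtain ⟨hmonoN, hconnN, hTfN⟩ := nodeOfTameEdge hT hne hL' hI' hmono' hconn' hTf' htame
    exact ⟨S', Tf', hL', hI', hmonoN, hconnN, hTfN, hsn'⟩
  · rintro ⟨S, Tf, hL, hI, hmono, hconn, hTf, hsn⟩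
    obtain ⟨S', Tf', hL', hI', hmono', hconn', hTf', hsn'⟩ :=
      edgeOfNode hT hne hL hI hmono hconn hTf hsn
    exact ⟨S', Tf', hL', hI', hmono', hconn', hTf', hsn'⟩
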